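/- arXiv:1812.04273 — 4 statements merged into one kernel-verified Lean document; each statement's English description precedes it below -/
import Mathlib

section
/- For every polynomial G of degree at most n, sup_{x ∈ [-1,1]} |G(x)| ≤ (n+1) · sup_{x ∈ [-1,1]} |G(x)·√(1-x²)|. -/
open Polynomial Finset Real

namespace SchurAux

open Polynomial.Chebyshev

lemma T_natDegree_le : ∀ k : ℕ, (T ℝ (k : ℤ)).natDegree ≤ k := by
  intro k
  induction k using Nat.twoStepInduction with
  | zero => simp [T_zero]
  | one => simp [T_one]
  | more k ih1 ih2 =>
    have h : T ℝ ((k : ℤ) + 2) = 2 * X * T ℝ ((k : ℤ) + 1) - T ℝ (k : ℤ) := T_add_two ℝ k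
    have hk2 : ((k : ℤ) + 2) = ((k + 2 : ℕ) : ℤ) := by push_cast; ring
    have hk1 : ((k : ℤ) + 1) = ((k + 1 : ℕ) : ℤ) := by push_cast; ring
    rw [hk2, hk1] at h
    rw [h]
    refine (natDegree_sub_le _ _).trans (max_le ?_ (ih1.trans (by omega)))
    refine (natDegree_mul_le).trans ?_
    have h1 : (2 * X : ℝ[X]).natDegree ≤ 1 := by
      simpa using natDegree_C_mul_le (2 : ℝ) X |>.trans (by simp)
    omega

lemma T_coeff_top : ∀ k : ℕ, (T ℝ ((k : ℤ) + 1)).coeff (k + 1) = 2 ^ k := by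
  intro k
  induction k using Nat.twoStepInduction with
  | zero => simp [T_one]
  | one =>
    rw [show ((1:ℕ):ℤ) + 1 = 2 by norm_num, T_two]
    simp [coeff_sub, coeff_ofNat_mul, coeff_X_pow, coeff_one]
  | more k ih1 ih2 =>
    have h : T ℝ ((k : ℤ) + 1 + 2) = 2 * X * T ℝ ((k : ℤ) + 1 + 1) - T ℝ ((k : ℤ) + 1) :=
      T_add_two ℝ ((k : ℤ) + 1)
    have e1 : ((k : ℤ) + 1 + 1) = ((k + 1 : ℕ) : ℤ) + 1 := by push_cast; ring
    have e2 : ((k : ℤ) + 1 + 2) = ((k + 2 : ℕ) : ℤ) + 1 := by push_cast; ring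
    rw [e1, e2] at h
    rw [h, coeff_sub]
    have hz : (T ℝ ((k : ℤ) + 1)).coeff (k + 2 + 1) = 0 := by
      apply coeff_eq_zero_of_natDegree_lt
      have := T_natDegree_le (k + 1)
      have e3 : ((k : ℤ) + 1) = ((k + 1 : ℕ) : ℤ) := by push_cast; ring
      rw [e3]
      omega
    rw [hz, sub_zero]
    have : (2 * X * T ℝ (((k + 1 : ℕ) : ℤ) + 1)) = 2 * (X * T ℝ (((k + 1 : ℕ) : ℤ) + 1)) := by
      ring
    rw [this, coeff_ofNat_mul, show k + 2 + 1 = (k + 1 + 1) + 1 from rfl, coeff_X_mul, ih2]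
    ring

lemma U_eval_one : ∀ k : ℕ, (U ℝ (k : ℤ)).eval 1 = (k : ℝ) + 1 := by
  intro k
  induction k using Nat.twoStepInduction with
  | zero => simp [U_zero]
  | one => simp [U_one]; norm_num
  | more k ih1 ih2 =>
    have h : U ℝ ((k : ℤ) + 2) = 2 * X * U ℝ ((k : ℤ) + 1) - U ℝ (k : ℤ) := U_add_two ℝ k
    have e2 : ((k : ℤ) + 2) = ((k + 2 : ℕ) : ℤ) := by push_cast; ring
    have e1 : ((k : ℤ) + 1) = ((k + 1 : ℕ) : ℤ) := by push_cast; ring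
    rw [e2, e1] at h
    rw [h]
    simp only [eval_sub, eval_mul, eval_ofNat, eval_X, ih1, ih2]
    push_cast
    ring

lemma key (n : ℕ) (G : ℝ[X]) (hG : G.natDegree ≤ n) (C : ℝ)
    (hC : ∀ y ∈ Set.Icc (-1:ℝ) 1, |G.eval y * Real.sqrt (1 - y ^ 2)| ≤ C)
    (x : ℝ) (hx1 : Real.cos (π / (2 * ((n:ℝ) + 1))) ≤ x) (hx2 : x ≤ 1) :
    |G.eval x| ≤ ((n : ℝ) + 1) * C := by
  classical
  have hC0 : 0 ≤ C := le_trans (abs_nonneg _) (hC 0 (by norm_num))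
  set m : ℕ := n + 1 with hmdef
  have hmR : (m : ℝ) = (n : ℝ) + 1 := by push_cast [hmdef]; ring
  have hπ := Real.pi_pos
  have hmpos : (0:ℝ) < m := by positivity
  set θ : ℕ → ℝ := fun k => (2 * k + 1) * π / (2 * m) with hθdef
  set t : ℕ → ℝ := fun k => Real.cos (θ k) with htdef
  -- basic node facts
  have hθpos : ∀ k, 0 < θ k := by
    intro k; apply div_pos (by positivity) (by positivity)
  have hθlt : ∀ k ∈ range m, θ k < π := by
    intro k hk
    simp only [mem_range] at hk
    rw [hθdef, div_lt_iff₀ (by positivity)]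
    have hkm : (k:ℝ) + 1 ≤ m := by exact_mod_cast hk
    nlinarith
  have hsin : ∀ k ∈ range m, 0 < Real.sin (θ k) := fun k hk =>
    Real.sin_pos_of_pos_of_lt_pi (hθpos k) (hθlt k hk)
  have hmem : ∀ k ∈ range m, t k ∈ Set.Icc (-1:ℝ) 1 := fun k _ =>
    ⟨Real.neg_one_le_cos _, Real.cos_le_one _⟩
  have hsqrt : ∀ k ∈ range m, Real.sqrt (1 - t k ^ 2) = Real.sin (θ k) := by
    intro k hk
    rw [htdef]
    have h1 : 1 - Real.cos (θ k) ^ 2 = Real.sin (θ k) ^ 2 := by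
      nlinarith [Real.sin_sq_add_cos_sq (θ k)]
    rw [h1, Real.sqrt_sq (hsin k hk).le]
  have hθ0 : θ 0 = π / (2 * ((n:ℝ)+1)) := by rw [hθdef]; simp only [hmR]; push_cast; ring
  have htlex : ∀ k ∈ range m, t k ≤ x := by
    intro k hk
    show Real.cos (θ k) ≤ x
    have h01 : θ 0 ≤ θ k := by
      rw [hθdef]
      show (2 * (0:ℕ) + 1) * π / (2 * m) ≤ (2 * (k:ℝ) + 1) * π / (2 * m)
      have hk0 : (0:ℝ) ≤ (k:ℝ) := Nat.cast_nonneg k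
      have : (2 * ((0:ℕ):ℝ) + 1) * π ≤ (2 * (k:ℝ) + 1) * π := by push_cast; nlinarith
      exact div_le_div_of_nonneg_right this (by positivity)
    calc Real.cos (θ k) ≤ Real.cos (θ 0) :=
          Real.cos_le_cos_of_nonneg_of_le_pi (hθpos 0).le (hθlt k hk).le h01
      _ ≤ x := by rw [hθ0]; exact hx1
  have htinj : Set.InjOn t (range m) := by
    intro a ha b hb hab
    have hθab : θ a = θ b := by
      apply Real.injOn_cos ⟨(hθpos a).le, (hθlt a ha).le⟩ ⟨(hθpos b).le, (hθlt b hb).le⟩ hab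
    rw [hθdef] at hθab
    simp only at hθab
    have : (a:ℝ) = (b:ℝ) := by
      field_simp at hθab
      linarith
    exact_mod_cast this
  have hmθ : ∀ k : ℕ, (m:ℝ) * θ k = π / 2 + k * π := by
    intro k
    rw [hθdef]
    field_simp
    ring
  have hTnode : ∀ k ∈ range m, (T ℝ (m : ℤ)).eval (t k) = 0 := by
    intro k hk
    rw [htdef]
    simp only
    rw [T_real_cos]
    have h2 : (((m:ℤ)):ℝ) * θ k = π / 2 + k * π := by rw [Int.cast_natCast]; exact hmθ k
    rw [h2, Real.cos_add_nat_mul_pi, Real.cos_pi_div_two, mul_zero]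
  have hUnode : ∀ k ∈ range m, |(U ℝ (n : ℤ)).eval (t k)| * Real.sin (θ k) = 1 := by
    intro k hk
    have h := U_real_cos (θ k) n
    have h2 : (((n:ℤ):ℝ) + 1) * θ k = π / 2 + k * π := by rw [Int.cast_natCast, ← hmR]; exact hmθ k
    rw [h2, Real.sin_add_nat_mul_pi, Real.sin_pi_div_two, mul_one] at h
    have : |(U ℝ (n : ℤ)).eval (t k) * Real.sin (θ k)| = 1 := by
      rw [htdef]; simp only; rw [h, abs_pow, abs_neg, abs_one, one_pow]
    rw [abs_mul, abs_of_pos (hsin k hk)] at this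
    exact this
  -- the nodal polynomial and its identification with the Chebyshev polynomial
  set P : ℝ[X] := Lagrange.nodal (range m) t with hPdef
  have hPdeg : P.natDegree = m := by rw [hPdef, Lagrange.natDegree_nodal, card_range]
  have hPmonic : P.Monic := Lagrange.nodal_monic
  have hTP : T ℝ (m : ℤ) = Polynomial.C ((2:ℝ) ^ n) * P := by
    set D : ℝ[X] := T ℝ (m : ℤ) - Polynomial.C ((2:ℝ)^n) * P with hDdef
    have hDeval : ∀ k ∈ range m, D.eval (t k) = 0 := by
      intro k hk
      rw [hDdef]
      simp only [eval_sub, eval_mul, eval_C]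
      rw [hTnode k hk, hPdef, Lagrange.eval_nodal_at_node hk]
      ring
    have hDcoeff : ∀ i : ℕ, m ≤ i → D.coeff i = 0 := by
      intro i hi
      rw [hDdef, coeff_sub, coeff_C_mul]
      rcases eq_or_lt_of_le hi with rfl | hlt
      · have h1 : (T ℝ (m:ℤ)).coeff m = 2 ^ n := by
          have h := T_coeff_top n
          have e : ((n:ℤ) + 1) = (m : ℤ) := by rw [hmdef]; push_cast; ring
          rw [e] at h
          rw [show m = n + 1 from hmdef]
          exact h
        have h2 : P.coeff m = 1 := by
          have h3 := hPmonic
          rw [Monic, leadingCoeff, hPdeg] at h3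
          exact h3
        rw [h1, h2, mul_one, sub_self]
      · have h1 : (T ℝ (m:ℤ)).coeff i = 0 :=
          coeff_eq_zero_of_natDegree_lt (lt_of_le_of_lt (T_natDegree_le m) hlt)
        have h2 : P.coeff i = 0 := coeff_eq_zero_of_natDegree_lt (by rw [hPdeg]; exact hlt)
        rw [h1, h2, mul_zero, sub_zero]
    have hD0 : D = 0 := by
      apply Polynomial.eq_zero_of_natDegree_lt_card_of_eval_eq_zero' D ((range m).image t)
      · intro y hy
        simp only [mem_image] at hy
        obtain ⟨k, hk, rfl⟩ := hy
        exact hDeval k hk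
      · rw [Finset.card_image_of_injOn htinj, card_range]
        rcases lt_or_ge D.natDegree m with h | h
        · exact h
        · exfalso
          rcases eq_or_ne D 0 with h0 | h0
          · rw [h0, natDegree_zero] at h; omega
          · exact (Polynomial.leadingCoeff_ne_zero.mpr h0) (hDcoeff _ h)
    exact sub_eq_zero.mp hD0
  -- derivative facts
  have hTP' : Polynomial.C ((2:ℝ)^n) * derivative P = Polynomial.C ((m:ℝ)) * U ℝ (n : ℤ) := by
    have e : ((m:ℤ) - 1) = (n : ℤ) := by rw [hmdef]; push_cast; ring
    have hcast : ((m:ℤ) : ℝ[X]) = Polynomial.C ((m:ℝ)) := by simp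
    rw [← derivative_C_mul, ← hTP, T_derivative_eq_U, e, hcast]
  have hPd1 : (derivative P).eval 1 = (m:ℝ)^2 / 2^n := by
    have h2 := congrArg (eval 1) hTP'
    simp only [eval_mul, eval_C] at h2
    rw [U_eval_one n] at h2
    rw [eq_div_iff (by positivity)]
    rw [← hmR] at h2
    nlinarith [h2]
  have hPdnode : ∀ k ∈ range m, |(derivative P).eval (t k)| * Real.sin (θ k)
      = (m:ℝ) / 2^n := by
    intro k hk
    have h2 := congrArg (eval (t k)) hTP'
    simp only [eval_mul, eval_C] at h2
    have h3 : (2:ℝ)^n * (|(derivative P).eval (t k)| * Real.sin (θ k))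
        = (m:ℝ) * (|(U ℝ (n:ℤ)).eval (t k)| * Real.sin (θ k)) := by
      have := congrArg abs h2
      rw [abs_mul, abs_mul, abs_of_pos (by positivity : (0:ℝ) < 2^n),
        abs_of_nonneg (Nat.cast_nonneg m : (0:ℝ) ≤ m)] at this
      calc (2:ℝ)^n * (|(derivative P).eval (t k)| * Real.sin (θ k))
          = (2:ℝ)^n * |(derivative P).eval (t k)| * Real.sin (θ k) := by ring
        _ = (m:ℝ) * |(U ℝ (n:ℤ)).eval (t k)| * Real.sin (θ k) := by rw [this]
        _ = (m:ℝ) * (|(U ℝ (n:ℤ)).eval (t k)| * Real.sin (θ k)) := by ring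
    rw [hUnode k hk, mul_one] at h3
    rw [eq_div_iff (by positivity : ((2:ℝ)^n) ≠ 0)]
    linarith
  -- Lagrange interpolation of G at the nodes
  have hdegG : G.degree < ((range m).card : ℕ) := by
    rw [card_range]
    calc G.degree ≤ (G.natDegree : WithBot ℕ) := degree_le_natDegree
      _ < (m : WithBot ℕ) := by
        exact_mod_cast Nat.lt_of_le_of_lt hG (by omega)
  have hGx : G.eval x = ∑ k ∈ range m, G.eval (t k) * (Lagrange.basis (range m) t k).eval x := by
    conv_lhs => rw [Lagrange.eq_interpolate htinj hdegG]
    rw [Lagrange.interpolate_apply, eval_finset_sum]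
    refine Finset.sum_congr rfl fun k hk => ?_
    rw [eval_mul, eval_C]
  have hbasis : ∀ k ∈ range m, (Lagrange.basis (range m) t k).eval x
      = (∏ j ∈ (range m).erase k, (x - t j)) * (∏ j ∈ (range m).erase k, (t k - t j))⁻¹ := by
    intro k hk
    rw [Lagrange.basis, eval_prod]
    have hterm : ∀ j ∈ (range m).erase k,
        (Lagrange.basisDivisor (t k) (t j)).eval x = (t k - t j)⁻¹ * (x - t j) := by
      intro j hj
      rw [Lagrange.basisDivisor]
      simp
    rw [Finset.prod_congr rfl hterm, Finset.prod_mul_distrib, Finset.prod_inv_distrib]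
    ring
  have hprodnode : ∀ k ∈ range m,
      ∏ j ∈ (range m).erase k, (t k - t j) = (derivative P).eval (t k) := by
    intro k hk
    rw [hPdef, Lagrange.eval_nodal_derivative_eval_node_eq hk, Lagrange.eval_nodal]
  have hsum1 : ∑ k ∈ range m, ∏ j ∈ (range m).erase k, ((1:ℝ) - t j)
      = (m:ℝ)^2 / 2^n := by
    rw [← hPd1, hPdef, Lagrange.derivative_nodal, eval_finset_sum]
    refine Finset.sum_congr rfl fun k hk => ?_
    rw [Lagrange.eval_nodal]
  -- per-term bound
  have hterm_bound : ∀ k ∈ range m,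
      |G.eval (t k) * (Lagrange.basis (range m) t k).eval x|
        ≤ (2:ℝ)^n / m * (C * ∏ j ∈ (range m).erase k, (1 - t j)) := by
    intro k hk
    rw [hbasis k hk, abs_mul, abs_mul, abs_inv]
    have hxprod_nonneg : (0:ℝ) ≤ ∏ j ∈ (range m).erase k, (x - t j) :=
      Finset.prod_nonneg fun j hj => sub_nonneg.mpr (htlex j (mem_of_mem_erase hj))
    have hxprod_le : ∏ j ∈ (range m).erase k, (x - t j)
        ≤ ∏ j ∈ (range m).erase k, (1 - t j) := by
      refine Finset.prod_le_prod (fun j hj => sub_nonneg.mpr (htlex j (mem_of_mem_erase hj)))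
        (fun j hj => by linarith)
    rw [abs_of_nonneg hxprod_nonneg, hprodnode k hk]
    have hinveq : |(derivative P).eval (t k)|⁻¹ = (2:ℝ)^n * Real.sin (θ k) / m := by
      have h := hPdnode k hk
      have hPval : |(derivative P).eval (t k)| = (m:ℝ) / (2^n * Real.sin (θ k)) := by
        rw [eq_div_iff (ne_of_gt (mul_pos (by positivity) (hsin k hk)))]
        calc |(derivative P).eval (t k)| * (2^n * Real.sin (θ k))
            = 2^n * (|(derivative P).eval (t k)| * Real.sin (θ k)) := by ring
          _ = 2^n * ((m:ℝ) / 2^n) := by rw [h]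
          _ = (m:ℝ) := by field_simp
      rw [hPval, inv_div]
    rw [hinveq]
    have hGk : |G.eval (t k)| * Real.sin (θ k) ≤ C := by
      have := hC (t k) (hmem k hk)
      rw [abs_mul, abs_of_nonneg (Real.sqrt_nonneg _), hsqrt k hk] at this
      exact this
    calc |G.eval (t k)| * ((∏ j ∈ (range m).erase k, (x - t j))
          * ((2:ℝ)^n * Real.sin (θ k) / m))
        = (2:ℝ)^n / m * ((|G.eval (t k)| * Real.sin (θ k))
            * ∏ j ∈ (range m).erase k, (x - t j)) := by ring
      _ ≤ (2:ℝ)^n / m * (C * ∏ j ∈ (range m).erase k, (1 - t j)) := by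
          apply mul_le_mul_of_nonneg_left ?_ (by positivity)
          apply mul_le_mul hGk hxprod_le hxprod_nonneg hC0
    done
  calc |G.eval x| ≤ ∑ k ∈ range m, |G.eval (t k) * (Lagrange.basis (range m) t k).eval x| := by
        rw [hGx]; exact Finset.abs_sum_le_sum_abs _ _
    _ ≤ ∑ k ∈ range m, (2:ℝ)^n / m * (C * ∏ j ∈ (range m).erase k, (1 - t j)) :=
        Finset.sum_le_sum hterm_bound
    _ = (2:ℝ)^n / m * C * ∑ k ∈ range m, ∏ j ∈ (range m).erase k, ((1:ℝ) - t j) := by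
        rw [Finset.mul_sum]
        refine Finset.sum_congr rfl fun k hk => by ring
    _ = ((n:ℝ) + 1) * C := by
        rw [hsum1, ← hmR]
        field_simp

end SchurAux

/-- Schur's inequality: for a real polynomial `G` of degree at most `n`,
`sup_{x∈[-1,1]} |G(x)| ≤ (n+1) · sup_{x∈[-1,1]} |G(x)√(1-x²)|`. -/
theorem schur_inequality (G : Polynomial ℝ) (n : ℕ) (hG : G.natDegree ≤ n)
    (C : ℝ) (hC : ∀ x ∈ Set.Icc (-1 : ℝ) 1, |G.eval x * Real.sqrt (1 - x ^ 2)| ≤ C) :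
    ∀ x ∈ Set.Icc (-1 : ℝ) 1, |G.eval x| ≤ ((n : ℝ) + 1) * C := by
  intro x hx
  obtain ⟨hx1, hx2⟩ := hx
  have hC0 : 0 ≤ C := le_trans (abs_nonneg _) (hC 0 (by norm_num))
  have hπ := Real.pi_pos
  have hm1 : (0:ℝ) < (n:ℝ) + 1 := by positivity
  set c : ℝ := Real.cos (π / (2 * ((n:ℝ) + 1))) with hcdef
  have harg0 : 0 < π / (2 * ((n:ℝ) + 1)) := by positivity
  have harg2 : π / (2 * ((n:ℝ) + 1)) ≤ π / 2 := by
    exact div_le_div_of_nonneg_left hπ.le (by norm_num) (by nlinarith [Nat.cast_nonneg (α := ℝ) n])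
  have hc0 : 0 ≤ c := Real.cos_nonneg_of_mem_Icc ⟨by linarith, harg2⟩
  rcases le_or_gt c x with hcx | hcx
  · exact SchurAux.key n G hG C hC x hcx hx2
  rcases le_or_gt x (-c) with hxc | hxc
  · -- reflect
    have hkey := SchurAux.key n (G.comp (-Polynomial.X)) ?_ C ?_ (-x) (by linarith) (by linarith)
    · rwa [Polynomial.eval_comp, Polynomial.eval_neg, Polynomial.eval_X, neg_neg] at hkey
    · refine le_trans (Polynomial.natDegree_comp_le) ?_
      simpa using hG
    · intro y hy
      rw [Polynomial.eval_comp, Polynomial.eval_neg, Polynomial.eval_X]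
      have h2 : (-y)^2 = y^2 := by ring
      rw [show (1:ℝ) - y^2 = 1 - (-y)^2 by ring]
      exact hC (-y) ⟨by linarith [hy.2], by linarith [hy.1]⟩
  · -- middle region
    have hsinlb : 1 / ((n:ℝ) + 1) ≤ Real.sin (π / (2 * ((n:ℝ) + 1))) := by
      have := Real.mul_le_sin harg0.le harg2
      calc 1 / ((n:ℝ) + 1) = 2 / π * (π / (2 * ((n:ℝ) + 1))) := by field_simp
        _ ≤ Real.sin (π / (2 * ((n:ℝ) + 1))) := this
    have hxabs : |x| ≤ c := by
      rw [abs_le]; constructor <;> linarith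
    have hsq : x ^ 2 ≤ c ^ 2 := by
      rw [← sq_abs x, ← sq_abs c, abs_of_nonneg hc0]
      exact pow_le_pow_left₀ (abs_nonneg x) hxabs 2
    have hsc : c ^ 2 + Real.sin (π / (2 * ((n:ℝ) + 1))) ^ 2 = 1 := by
      rw [hcdef]
      rw [add_comm]
      exact Real.sin_sq_add_cos_sq _
    have hsqrtlb : 1 / ((n:ℝ) + 1) ≤ Real.sqrt (1 - x ^ 2) := by
      refine le_trans hsinlb ?_
      have hsin0 : 0 ≤ Real.sin (π / (2 * ((n:ℝ) + 1))) :=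
        Real.sin_nonneg_of_nonneg_of_le_pi harg0.le (by linarith)
      rw [show Real.sin (π / (2 * ((n:ℝ) + 1)))
          = Real.sqrt (Real.sin (π / (2 * ((n:ℝ) + 1))) ^ 2) from (Real.sqrt_sq hsin0).symm]
      apply Real.sqrt_le_sqrt
      nlinarith [hsc, hsq]
    have h1 : 1 ≤ ((n:ℝ) + 1) * Real.sqrt (1 - x ^ 2) := by
      calc (1:ℝ) = ((n:ℝ) + 1) * (1 / ((n:ℝ) + 1)) := by field_simp
        _ ≤ ((n:ℝ) + 1) * Real.sqrt (1 - x ^ 2) := by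
            exact mul_le_mul_of_nonneg_left hsqrtlb hm1.le
    calc |G.eval x| = |G.eval x| * 1 := by ring
      _ ≤ |G.eval x| * (((n:ℝ) + 1) * Real.sqrt (1 - x ^ 2)) :=
          mul_le_mul_of_nonneg_left h1 (abs_nonneg _)
      _ = ((n:ℝ) + 1) * (|G.eval x| * Real.sqrt (1 - x ^ 2)) := by ring
      _ = ((n:ℝ) + 1) * |G.eval x * Real.sqrt (1 - x ^ 2)| := by
          rw [abs_mul, abs_of_nonneg (Real.sqrt_nonneg _)]
      _ ≤ ((n:ℝ) + 1) * C := mul_le_mul_of_nonneg_left (hC x ⟨hx1, hx2⟩) hm1.le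
end

section
/- Let V = {(x,y) ∈ ℝ² : y³ = (1-x²)y} and E = {(x,y) ∈ V : x ∈ [-1,1]}. For every polynomial P(x,y) = G₀(x) + G₁(x)y + G₂(x)y² with G₀,G₁,G₂ real polynomials, one has sup_E |∂P/∂x| ≤ 6 (deg P)² sup_E |P|. -/
open Real Finset

noncomputable def nod (n k : ℕ) : ℝ := (2*k+1) * π / (2*n)
noncomputable def wt (n k : ℕ) : ℝ := (-1)^k / Real.sin (nod n k / 2)^2

lemma nod_pos {n k : ℕ} (hn : 1 ≤ n) : 0 < nod n k := by
  unfold nod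
  have : (0:ℝ) < 2*k+1 := by positivity
  have h2 : (0:ℝ) < 2*n := by positivity
  positivity

lemma nod_lt {n k : ℕ} (hn : 1 ≤ n) (hk : k < 2*n) : nod n k < 2*π := by
  unfold nod
  rw [div_lt_iff₀ (by positivity)]
  have : (2*k+1 : ℝ) < 2*(2*n) := by
    have : (k:ℝ) + 1 ≤ 2*n := by exact_mod_cast hk
    linarith
  nlinarith [Real.pi_pos]

lemma sin_half_pos {n k : ℕ} (hn : 1 ≤ n) (hk : k < 2*n) : 0 < Real.sin (nod n k / 2) := by
  apply Real.sin_pos_of_pos_of_lt_pi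
  · have := nod_pos (k := k) hn; linarith
  · have := nod_lt hn hk; linarith

lemma nod_reflect {n k : ℕ} (hn : 1 ≤ n) (hk : k < 2*n) :
    nod n (2*n - 1 - k) = 2*π - nod n k := by
  unfold nod
  have h : (2*n - 1 - k : ℕ) + k + 1 = 2*n := by omega
  have hcast : ((2*n - 1 - k : ℕ) : ℝ) + k + 1 = 2*(n:ℝ) := by exact_mod_cast congrArg (Nat.cast : ℕ → ℝ) h
  have e : ((2*n - 1 - k : ℕ) : ℝ) = 2*(n:ℝ) - 1 - (k:ℝ) := by linarith
  rw [e]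
  have hn' : (0:ℝ) < 2*(n:ℝ) := by positivity
  field_simp
  ring

lemma wt_reflect {n k : ℕ} (hn : 1 ≤ n) (hk : k < 2*n) :
    wt n (2*n - 1 - k) = - wt n k := by
  unfold wt
  rw [nod_reflect hn hk]
  have hsin : Real.sin ((2*π - nod n k)/2) = Real.sin (nod n k / 2) := by
    rw [show (2*π - nod n k)/2 = π - nod n k / 2 by ring, Real.sin_pi_sub]
  rw [hsin]
  have hpow : ((-1:ℝ))^(2*n-1-k) = -(-1:ℝ)^k := by
    have h : (2*n - 1 - k) + k = 2*n - 1 := by omega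
    have : ((-1:ℝ))^((2*n-1-k) + k) = ((-1:ℝ))^(2*n-1) := by rw [h]
    rw [pow_add] at this
    have hodd : Odd (2*n-1) := by
      refine ⟨n-1, by omega⟩
    rw [hodd.neg_one_pow] at this
    have hsq : ((-1:ℝ))^k * ((-1:ℝ))^k = 1 := by
      rw [← pow_add]; exact Even.neg_one_pow ⟨k, rfl⟩
    calc ((-1:ℝ))^(2*n-1-k) = ((-1:ℝ))^(2*n-1-k) * (((-1:ℝ))^k * ((-1:ℝ))^k) := by rw [hsq]; ring
    _ = (((-1:ℝ))^(2*n-1-k) * ((-1:ℝ))^k) * ((-1:ℝ))^k := by ring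
    _ = -(-1:ℝ)^k := by rw [this]; ring
  rw [hpow]; ring

/-- The cosine sums all vanish by reflection symmetry. -/
lemma cos_sum_zero {n : ℕ} (hn : 1 ≤ n) (m : ℤ) :
    ∑ k ∈ Finset.range (2*n), wt n k * Real.cos (m * nod n k) = 0 := by
  have h := Finset.sum_range_reflect (fun k => wt n k * Real.cos (m * nod n k)) (2*n)
  have h2 : ∀ k ∈ Finset.range (2*n),
      wt n (2*n - 1 - k) * Real.cos (m * nod n (2*n - 1 - k))
        = -(wt n k * Real.cos (m * nod n k)) := by
    intro k hk
    rw [Finset.mem_range] at hk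
    rw [wt_reflect hn hk, nod_reflect hn hk]
    have : Real.cos (m * (2*π - nod n k)) = Real.cos (m * nod n k) := by
      rw [show (m:ℝ) * (2*π - nod n k) = m * (2*π) - m * nod n k by ring,
        Real.cos_int_mul_two_pi_sub]
    rw [this]; ring
  rw [Finset.sum_congr rfl h2, Finset.sum_neg_distrib] at h
  linarith

lemma tel_sum (φ c : ℝ) (K : ℕ) :
    2 * Real.sin (φ/2) * ∑ k ∈ Finset.range K, Real.sin (k*φ + c)
      = Real.cos (c - φ/2) - Real.cos (K*φ + c - φ/2) := by
  induction K with
  | zero => simp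
  | succ K ih =>
    rw [Finset.sum_range_succ, mul_add, ih]
    have h : Real.cos (K*φ + c - φ/2) - Real.cos ((K+1 : ℕ)*φ + c - φ/2)
        = 2 * Real.sin (φ/2) * Real.sin (K*φ + c) := by
      rw [Real.cos_sub_cos,
        show (↑K*φ + c - φ/2 + ((↑(K+1) : ℝ)*φ + c - φ/2))/2 = ↑K*φ + c by push_cast; ring,
        show (↑K*φ + c - φ/2 - ((↑(K+1) : ℝ)*φ + c - φ/2))/2 = -(φ/2) by push_cast; ring,
        Real.sin_neg]
      ring
    push_cast at h ⊢
    linarith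

/-- alternating sine sum vanishes for 1 ≤ m < n -/
lemma alt_sin_sum {n m : ℕ} (hn : 1 ≤ n) (hm1 : 1 ≤ m) (hmn : m < n) :
    ∑ k ∈ Finset.range (2*n), (-1:ℝ)^k * Real.sin (m * nod n k) = 0 := by
  set φ : ℝ := m*π/n + π with hφ
  set c : ℝ := m*π/(2*n) with hc
  have hterm : ∀ k ∈ Finset.range (2*n),
      (-1:ℝ)^k * Real.sin (m * nod n k) = Real.sin (k*φ + c) := by
    intro k _
    have : (k:ℝ)*φ + c = m * nod n k + (k:ℤ)*π := by
      unfold nod; rw [hφ, hc]; push_cast; field_simp; ring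
    rw [this, Real.sin_add_int_mul_pi, zpow_natCast]
  rw [Finset.sum_congr rfl hterm]
  have hs : Real.sin (φ/2) ≠ 0 := by
    have : φ/2 = π/2 + m*π/(2*n) := by rw [hφ]; ring
    rw [this]
    have h1 : (m:ℝ)*π/(2*n) < π/2 := by
      rw [div_lt_div_iff₀ (by positivity) (by norm_num)]
      have : (m:ℝ) < n := by exact_mod_cast hmn
      nlinarith [Real.pi_pos]
    have h0 : (0:ℝ) ≤ m*π/(2*n) := by positivity
    have := Real.cos_pos_of_mem_Ioo (x := π/2 + m*π/(2*n) - π/2) ⟨by linarith [Real.pi_pos], by linarith⟩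
    simp only [add_sub_cancel_left] at this
    rw [show π/2 + ↑m*π/(2*↑n) = ↑m*π/(2*↑n) + π/2 by ring, Real.sin_add_pi_div_two]
    linarith
  have htel := tel_sum φ c (2*n)
  have hcos : Real.cos ((2*n : ℕ)*φ + c - φ/2) = Real.cos (c - φ/2) := by
    have : ((2*n : ℕ):ℝ)*φ + c - φ/2 = (c - φ/2) + ((m+n : ℕ) : ℤ)*(2*π) := by
      rw [hφ]; push_cast; field_simp; ring
    rw [this, Real.cos_add_int_mul_two_pi]
  rw [hcos, sub_self] at htel
  have h2 : 2 * Real.sin (φ/2) ≠ 0 := by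
    intro h; apply hs; linarith
  exact (mul_eq_zero.mp htel).resolve_left h2

noncomputable def Snod (n m : ℕ) : ℝ := ∑ k ∈ Finset.range (2*n), wt n k * Real.sin (m * nod n k)

lemma cos_one_sub (x : ℝ) : Real.cos x = 1 - 2 * Real.sin (x/2)^2 := by
  have h1 : Real.cos x = Real.cos (2*(x/2)) := by congr 1; ring
  rw [h1, Real.cos_two_mul']
  have := Real.sin_sq_add_cos_sq (x/2)
  linarith

lemma Snod_rec {n m : ℕ} (hn : 1 ≤ n) (hm : m + 1 < n) :
    Snod n (m+2) + Snod n m = 2 * Snod n (m+1) := by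
  have key : ∀ k ∈ Finset.range (2*n),
      wt n k * Real.sin ((m+2 : ℕ) * nod n k) + wt n k * Real.sin (m * nod n k)
        - 2 * (wt n k * Real.sin ((m+1 : ℕ) * nod n k))
      = -4 * ((-1:ℝ)^k * Real.sin ((m+1 : ℕ) * nod n k)) := by
    intro k hk
    rw [Finset.mem_range] at hk
    have hsin : Real.sin ((m+2:ℕ) * nod n k) + Real.sin ((m:ℕ) * nod n k)
        = 2 * Real.sin ((m+1:ℕ) * nod n k) * Real.cos (nod n k) := by
      have e1 := Real.sin_add (((m:ℝ)+1)*nod n k) (nod n k)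
      have e2 := Real.sin_sub (((m:ℝ)+1)*nod n k) (nod n k)
      push_cast
      rw [show ((m:ℝ)+2) * nod n k = ((m:ℝ)+1)*nod n k + nod n k by ring,
        show (m:ℝ) * nod n k = ((m:ℝ)+1)*nod n k - nod n k by ring, e1, e2]
      ring
    have hs := sin_half_pos hn hk
    have hs2 : Real.sin (nod n k / 2)^2 ≠ 0 := by positivity
    have hwt : wt n k * Real.sin (nod n k / 2)^2 = (-1:ℝ)^k := by
      unfold wt; field_simp
    have hcos := cos_one_sub (nod n k)
    calc wt n k * Real.sin ((m+2 : ℕ) * nod n k) + wt n k * Real.sin (m * nod n k)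
          - 2 * (wt n k * Real.sin ((m+1 : ℕ) * nod n k))
        = wt n k * ((Real.sin ((m+2:ℕ) * nod n k) + Real.sin ((m:ℕ) * nod n k))
            - 2 * Real.sin ((m+1:ℕ) * nod n k)) := by ring
      _ = wt n k * (2 * Real.sin ((m+1:ℕ) * nod n k) * (Real.cos (nod n k) - 1)) := by
            rw [hsin]; ring
      _ = (wt n k * Real.sin (nod n k / 2)^2) * (-4 * Real.sin ((m+1:ℕ) * nod n k)) := by
            rw [hcos]; ring
      _ = -4 * ((-1:ℝ)^k * Real.sin ((m+1 : ℕ) * nod n k)) := by rw [hwt]; ring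
  have hsum : Snod n (m+2) + Snod n m - 2 * Snod n (m+1)
      = ∑ k ∈ Finset.range (2*n), -4 * ((-1:ℝ)^k * Real.sin ((m+1 : ℕ) * nod n k)) := by
    unfold Snod
    rw [← Finset.sum_add_distrib, Finset.mul_sum, ← Finset.sum_sub_distrib]
    exact Finset.sum_congr rfl key
  rw [← Finset.mul_sum, alt_sin_sum hn (Nat.le_add_left 1 m) hm, mul_zero] at hsum
  linarith

lemma Snod_lin {n : ℕ} (hn : 1 ≤ n) : ∀ m, m ≤ n → Snod n m = m * Snod n 1 := by
  intro m
  induction m using Nat.strong_induction_on with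
  | _ m ih =>
    match m with
    | 0 => intro _; simp [Snod]
    | 1 => intro _; norm_num
    | (k+2) =>
      intro hk
      have h1 := ih (k+1) (by omega) (by omega)
      have h0 := ih k (by omega) (by omega)
      have hrec := Snod_rec hn (show k + 1 < n by omega)
      rw [h1, h0] at hrec
      push_cast
      push_cast at hrec
      linarith

lemma sin_n_nod {n k : ℕ} (hn : 1 ≤ n) : Real.sin (n * nod n k) = (-1:ℝ)^k := by
  have hne : (n:ℝ) ≠ 0 := by positivity
  have : (n:ℝ) * nod n k = π/2 + (k:ℤ)*π := by
    unfold nod; push_cast; field_simp; ring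
  rw [this, Real.sin_add_int_mul_pi, zpow_natCast, Real.sin_pi_div_two, mul_one]

lemma Snod_top {n : ℕ} (hn : 1 ≤ n) :
    Snod n n = ∑ k ∈ Finset.range (2*n), (1 / Real.sin (nod n k / 2)^2) := by
  unfold Snod
  apply Finset.sum_congr rfl
  intro k hk
  rw [sin_n_nod hn]
  unfold wt
  rw [div_mul_eq_mul_div, ← pow_add]
  have : Even (k + k) := ⟨k, rfl⟩
  rw [this.neg_one_pow]

lemma wt_abs_sum {n : ℕ} (hn : 1 ≤ n) :
    ∑ k ∈ Finset.range (2*n), |wt n k| = Snod n n := by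
  rw [Snod_top hn]
  apply Finset.sum_congr rfl
  intro k hk
  rw [Finset.mem_range] at hk
  have hs := sin_half_pos hn hk
  unfold wt
  rw [abs_div, abs_pow, abs_neg, abs_one, one_pow, abs_of_pos (by positivity)]

lemma S1_pos {n : ℕ} (hn : 1 ≤ n) : 0 < Snod n 1 := by
  have htop : Snod n n = n * Snod n 1 := Snod_lin hn n le_rfl
  have hpos : 0 < Snod n n := by
    rw [Snod_top hn]
    apply Finset.sum_pos
    · intro k hk
      rw [Finset.mem_range] at hk
      have := sin_half_pos hn hk
      positivity
    · refine ⟨0, Finset.mem_range.mpr (by omega)⟩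
  rw [htop] at hpos
  have hn' : (0:ℝ) < n := by exact_mod_cast hn
  nlinarith [hpos, hn']

lemma wt_sin_sum_int {n : ℕ} (hn : 1 ≤ n) {m : ℤ} (hm : m.natAbs ≤ n) :
    ∑ k ∈ Finset.range (2*n), wt n k * Real.sin (m * nod n k) = m * Snod n 1 := by
  obtain ⟨mn, rfl | rfl⟩ := m.eq_nat_or_neg
  · have hmn : mn ≤ n := by simpa using hm
    have hS := Snod_lin hn mn hmn
    push_cast
    rw [show (∑ k ∈ Finset.range (2*n), wt n k * Real.sin ((mn:ℝ) * nod n k)) = Snod n mn from rfl, hS]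
  · have hmn : mn ≤ n := by simpa using hm
    have hS := Snod_lin hn mn hmn
    push_cast
    have hterm : ∀ k ∈ Finset.range (2*n),
        wt n k * Real.sin (-(mn:ℝ) * nod n k) = -(wt n k * Real.sin ((mn:ℝ) * nod n k)) := by
      intro k _
      rw [show -(mn:ℝ) * nod n k = -((mn:ℝ)*nod n k) by ring, Real.sin_neg]; ring
    rw [Finset.sum_congr rfl hterm, Finset.sum_neg_distrib,
      show (∑ k ∈ Finset.range (2*n), wt n k * Real.sin ((mn:ℝ) * nod n k)) = Snod n mn from rfl, hS]
    ring

lemma wt_exp_sum {n : ℕ} (hn : 1 ≤ n) {m : ℤ} (hm : m.natAbs ≤ n) :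
    ∑ k ∈ Finset.range (2*n), (wt n k : ℂ) * Complex.exp (m * nod n k * Complex.I)
      = (m : ℂ) * ((Snod n 1 : ℝ) : ℂ) * Complex.I := by
  have hterm : ∀ k, ((m : ℂ) * (nod n k : ℝ)) = (((m : ℝ) * nod n k : ℝ) : ℂ) := by
    intro k; push_cast; ring
  have : ∀ k, (wt n k : ℂ) * Complex.exp (m * nod n k * Complex.I)
      = (((wt n k * Real.cos (m * nod n k) : ℝ)) : ℂ)
        + (((wt n k * Real.sin (m * nod n k) : ℝ)) : ℂ) * Complex.I := by
    intro k
    rw [hterm k, Complex.exp_mul_I]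
    push_cast [Complex.ofReal_cos, Complex.ofReal_sin]
    ring
  rw [Finset.sum_congr rfl (fun k _ => this k), Finset.sum_add_distrib,
    ← Finset.sum_mul, ← Complex.ofReal_sum, ← Complex.ofReal_sum,
    cos_sum_zero hn m, wt_sin_sum_int hn hm]
  push_cast
  ring

noncomputable def trigC (n : ℕ) (c : ℤ → ℂ) (u : ℝ) : ℂ :=
  ∑ m ∈ Finset.Icc (-(n:ℤ)) (n:ℤ), c m * Complex.exp (m * u * Complex.I)

lemma core_bound {n : ℕ} (hn : 1 ≤ n) (c : ℤ → ℂ) {M : ℝ}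
    (hM : ∀ u : ℝ, ‖trigC n c u‖ ≤ M) (θ : ℝ) :
    ‖∑ m ∈ Finset.Icc (-(n:ℤ)) (n:ℤ),
      (m : ℂ) * c m * Complex.exp (m * θ * Complex.I)‖ ≤ n * M := by
  have key : ∑ k ∈ Finset.range (2*n), (wt n k : ℂ) * trigC n c (θ + nod n k)
      = ((Snod n 1 : ℝ) : ℂ) * Complex.I
        * ∑ m ∈ Finset.Icc (-(n:ℤ)) (n:ℤ), (m : ℂ) * c m * Complex.exp (m * θ * Complex.I) := by
    unfold trigC
    rw [Finset.mul_sum]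
    simp only [Finset.mul_sum]
    rw [Finset.sum_comm]
    apply Finset.sum_congr rfl
    intro m hm
    have hmabs : m.natAbs ≤ n := by
      rw [Finset.mem_Icc] at hm
      omega
    have hsplit : ∀ k, (wt n k : ℂ) * (c m * Complex.exp (m * (((θ + nod n k : ℝ)) : ℂ) * Complex.I))
        = (c m * Complex.exp (m * θ * Complex.I))
          * ((wt n k : ℂ) * Complex.exp (m * nod n k * Complex.I)) := by
      intro k
      rw [show (m : ℂ) * (((θ + nod n k : ℝ)) : ℂ) * Complex.I
          = m * θ * Complex.I + m * nod n k * Complex.I by push_cast; ring, Complex.exp_add]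
      ring
    rw [Finset.sum_congr rfl (fun k _ => hsplit k), ← Finset.mul_sum, wt_exp_sum hn hmabs]
    ring
  have habs1 : ‖∑ k ∈ Finset.range (2*n), (wt n k : ℂ) * trigC n c (θ + nod n k)‖
      ≤ (n : ℝ) * Snod n 1 * M := by
    calc ‖∑ k ∈ Finset.range (2*n), (wt n k : ℂ) * trigC n c (θ + nod n k)‖
        ≤ ∑ k ∈ Finset.range (2*n), ‖(wt n k : ℂ) * trigC n c (θ + nod n k)‖ := by
          exact norm_sum_le _ _
      _ ≤ ∑ k ∈ Finset.range (2*n), |wt n k| * M := by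
          apply Finset.sum_le_sum
          intro k _
          rw [norm_mul, Complex.norm_real, Real.norm_eq_abs]
          exact mul_le_mul_of_nonneg_left (hM _) (abs_nonneg _)
      _ = (∑ k ∈ Finset.range (2*n), |wt n k|) * M := by rw [Finset.sum_mul]
      _ = Snod n n * M := by rw [wt_abs_sum hn]
      _ = (n : ℝ) * Snod n 1 * M := by rw [Snod_lin hn n le_rfl]
  rw [key] at habs1
  rw [norm_mul, norm_mul, Complex.norm_real, Real.norm_eq_abs, Complex.norm_I, mul_one,
    abs_of_pos (S1_pos hn)] at habs1
  have hS := S1_pos hn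
  have h2 : Snod n 1 * ‖∑ m ∈ Finset.Icc (-(n:ℤ)) (n:ℤ),
      (m:ℂ) * c m * Complex.exp (m * θ * Complex.I)‖ ≤ Snod n 1 * ((n:ℝ) * M) := by
    nlinarith [habs1]
  exact le_of_mul_le_mul_left h2 hS

lemma trigC_hasDerivAt (n : ℕ) (c : ℤ → ℂ) (θ : ℝ) :
    HasDerivAt (trigC n c)
      (Complex.I * ∑ m ∈ Finset.Icc (-(n:ℤ)) (n:ℤ),
        (m : ℂ) * c m * Complex.exp (m * θ * Complex.I)) θ := by
  have : ∀ m ∈ Finset.Icc (-(n:ℤ)) (n:ℤ),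
      HasDerivAt (fun u : ℝ => c m * Complex.exp (m * u * Complex.I))
        (Complex.I * ((m : ℂ) * c m * Complex.exp (m * θ * Complex.I))) θ := by
    intro m _
    have h0 : HasDerivAt (fun u : ℝ => ((u : ℝ) : ℂ)) 1 θ := (hasDerivAt_id θ).ofReal_comp
    have h1 : HasDerivAt (fun u : ℝ => (m : ℂ) * (u : ℂ) * Complex.I)
        ((m : ℂ) * Complex.I) θ := by
      have := (h0.const_mul ((m : ℂ))).mul_const Complex.I
      simpa using this
    have h2 := h1.cexp
    have h3 := h2.const_mul (c m)
    refine h3.congr_deriv ?_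
    ring
  have hsum := HasDerivAt.fun_sum this
  refine HasDerivAt.congr_deriv hsum ?_
  rw [Finset.mul_sum]

lemma deriv_bound {n : ℕ} (hn : 1 ≤ n) (c : ℤ → ℂ) {M : ℝ} (f f' : ℝ → ℝ)
    (hrep : ∀ u, ((f u : ℝ) : ℂ) = trigC n c u) (hder : ∀ u, HasDerivAt f (f' u) u)
    (hM : ∀ u, |f u| ≤ M) (θ : ℝ) : |f' θ| ≤ n * M := by
  have h1 : HasDerivAt (fun u => ((f u : ℝ) : ℂ)) ((f' θ : ℝ) : ℂ) θ := (hder θ).ofReal_comp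
  have h2 : HasDerivAt (trigC n c) ((f' θ : ℝ) : ℂ) θ := by
    have : (fun u => ((f u : ℝ) : ℂ)) = trigC n c := funext hrep
    rwa [this] at h1
  have h3 := trigC_hasDerivAt n c θ
  have heq := h2.unique h3
  have hM' : ∀ u, ‖trigC n c u‖ ≤ M := by
    intro u
    rw [← hrep u, Complex.norm_real, Real.norm_eq_abs]
    exact hM u
  calc |f' θ| = ‖((f' θ : ℝ) : ℂ)‖ := by rw [Complex.norm_real, Real.norm_eq_abs]
    _ = ‖Complex.I * ∑ m ∈ Finset.Icc (-(n:ℤ)) (n:ℤ),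
          (m : ℂ) * c m * Complex.exp (m * θ * Complex.I)‖ := by rw [heq]
    _ = ‖∑ m ∈ Finset.Icc (-(n:ℤ)) (n:ℤ),
          (m : ℂ) * c m * Complex.exp (m * θ * Complex.I)‖ := by
        rw [norm_mul, Complex.norm_I, one_mul]
    _ ≤ n * M := core_bound hn c hM' θ

def TRep (j : ℕ) (f : ℝ → ℂ) : Prop :=
  ∃ c : ℤ → ℂ, (∀ m : ℤ, m ∉ Finset.Icc (-(j:ℤ)) (j:ℤ) → c m = 0) ∧ ∀ u, f u = trigC j c u

lemma Rep_congr {j : ℕ} {f g : ℝ → ℂ} (h : TRep j f) (hfg : ∀ u, f u = g u) : TRep j g := by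
  obtain ⟨c, hs, hf⟩ := h
  exact ⟨c, hs, fun u => (hfg u) ▸ hf u⟩

lemma Rep_mono {j j' : ℕ} (hj : j ≤ j') {f : ℝ → ℂ} (h : TRep j f) : TRep j' f := by
  obtain ⟨c, hs, hf⟩ := h
  have hsub : Finset.Icc (-(j:ℤ)) (j:ℤ) ⊆ Finset.Icc (-(j':ℤ)) (j':ℤ) := by
    apply Finset.Icc_subset_Icc <;> omega
  refine ⟨c, fun m hm => hs m (fun hc => hm (hsub hc)), fun u => ?_⟩
  beta_reduce
  rw [hf u]
  unfold trigC
  apply Finset.sum_subset hsub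
  intro m _ hm
  rw [hs m hm, zero_mul]

lemma Rep_zero (j : ℕ) : TRep j (fun _ => 0) := by
  refine ⟨fun _ => 0, fun _ _ => rfl, fun u => ?_⟩
  unfold trigC; simp

lemma Rep_const (a : ℂ) : TRep 0 (fun _ => a) := by
  refine ⟨fun m => if m = 0 then a else 0, ?_, fun u => ?_⟩
  · intro m hm
    rw [Finset.mem_Icc] at hm
    have : m ≠ 0 := by omega
    simp [this]
  · unfold trigC
    norm_num

lemma Rep_add {j : ℕ} {f g : ℝ → ℂ} (hf : TRep j f) (hg : TRep j g) :
    TRep j (fun u => f u + g u) := by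
  obtain ⟨c, hcs, hc⟩ := hf
  obtain ⟨d, hds, hd⟩ := hg
  refine ⟨c + d, fun m hm => by show c m + d m = 0; rw [hcs m hm, hds m hm, add_zero], fun u => ?_⟩
  show f u + g u = _
  rw [hc u, hd u]
  unfold trigC
  rw [← Finset.sum_add_distrib]
  apply Finset.sum_congr rfl
  intro m _
  simp
  ring

lemma Rep_cmul {j : ℕ} (a : ℂ) {f : ℝ → ℂ} (hf : TRep j f) : TRep j (fun u => a * f u) := by
  obtain ⟨c, hcs, hc⟩ := hf
  refine ⟨fun m => a * c m, fun m hm => by show a * c m = 0; rw [hcs m hm, mul_zero], fun u => ?_⟩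
  show a * f u = _
  rw [hc u]
  unfold trigC
  rw [Finset.mul_sum]
  apply Finset.sum_congr rfl
  intro m _
  ring

lemma Rep_shift {j : ℕ} (s : ℤ) (hs : s = 1 ∨ s = -1) {f : ℝ → ℂ} (hf : TRep j f) :
    TRep (j+1) (fun u => Complex.exp (s * u * Complex.I) * f u) := by
  obtain ⟨c, hcs, hc⟩ := hf
  refine ⟨fun m => c (m - s), ?_, fun u => ?_⟩
  · intro m hm
    show c (m - s) = 0
    apply hcs
    rw [Finset.mem_Icc] at hm ⊢
    push_cast at hm ⊢
    omega
  · show Complex.exp (s * u * Complex.I) * f u = _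
    rw [hc u]
    unfold trigC
    rw [Finset.mul_sum]
    have hmap : Finset.Icc (-(j:ℤ) + s) ((j:ℤ) + s)
        = (Finset.Icc (-(j:ℤ)) (j:ℤ)).map (addRightEmbedding s) := by
      rw [Finset.map_add_right_Icc]
    have hsub : Finset.Icc (-(j:ℤ) + s) ((j:ℤ) + s) ⊆ Finset.Icc (-((j:ℤ)+1)) ((j:ℤ)+1) := by
      apply Finset.Icc_subset_Icc <;> omega
    have hlhs : ∑ m ∈ Finset.Icc (-(j:ℤ)) (j:ℤ),
          Complex.exp (s * u * Complex.I) * (c m * Complex.exp (m * u * Complex.I))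
        = ∑ m ∈ Finset.Icc (-(j:ℤ) + s) ((j:ℤ) + s),
          c (m - s) * Complex.exp (m * u * Complex.I) := by
      rw [hmap, Finset.sum_map]
      apply Finset.sum_congr rfl
      intro m _
      have : addRightEmbedding s m = m + s := rfl
      rw [this]
      rw [show ((m + s : ℤ) : ℂ) * u * Complex.I
          = m * u * Complex.I + s * u * Complex.I by push_cast; ring, Complex.exp_add]
      rw [add_sub_cancel_right]
      ring
    rw [hlhs]
    apply Finset.sum_subset hsub
    intro m _ hm
    rw [hcs (m - s) ?_, zero_mul]
    rw [Finset.mem_Icc] at hm ⊢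
    push_cast at hm ⊢
    omega

lemma Rep_mul_cos {j : ℕ} {f : ℝ → ℂ} (hf : TRep j f) :
    TRep (j+1) (fun u => f u * ((Real.cos u : ℝ) : ℂ)) := by
  have h1 := Rep_shift 1 (Or.inl rfl) hf
  have h2 := Rep_shift (-1) (Or.inr rfl) hf
  have h3 := Rep_cmul (1/2 : ℂ) (Rep_add h1 h2)
  apply Rep_congr h3
  intro u
  rw [Complex.ofReal_cos]
  rw [show Complex.cos (u : ℂ) = (Complex.exp (u * Complex.I) + Complex.exp (-u * Complex.I))/2
    from rfl]
  push_cast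
  ring

lemma Rep_mul_sin {j : ℕ} {f : ℝ → ℂ} (hf : TRep j f) :
    TRep (j+1) (fun u => f u * ((Real.sin u : ℝ) : ℂ)) := by
  have h1 := Rep_shift 1 (Or.inl rfl) hf
  have h2 := Rep_shift (-1) (Or.inr rfl) hf
  have h3 := Rep_cmul (Complex.I/2 : ℂ) (Rep_add h2 (Rep_cmul (-1 : ℂ) h1))
  apply Rep_congr h3
  intro u
  rw [Complex.ofReal_sin]
  rw [show Complex.sin (u : ℂ)
      = (Complex.exp (-u * Complex.I) - Complex.exp (u * Complex.I)) * Complex.I / 2 from rfl]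
  push_cast
  ring

lemma Rep_sum {j : ℕ} {ι : Type*} (s : Finset ι) (F : ι → ℝ → ℂ)
    (h : ∀ i ∈ s, TRep j (F i)) : TRep j (fun u => ∑ i ∈ s, F i u) := by
  induction s using Finset.cons_induction with
  | empty => simpa using Rep_zero j
  | cons i s his ih =>
    rw [show (fun u => ∑ x ∈ Finset.cons i s his, F x u)
        = (fun u => F i u + ∑ x ∈ s, F x u) from funext fun u => Finset.sum_cons his]
    exact Rep_add (h i (Finset.mem_cons_self i s))
      (ih fun x hx => h x (Finset.mem_cons_of_mem hx))

lemma Rep_cospow : ∀ N : ℕ, TRep N (fun u => ((Real.cos u : ℝ) : ℂ)^N) := by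
  intro N
  induction N with
  | zero => simpa using Rep_const 1
  | succ N ih =>
    have := Rep_mul_cos ih
    apply Rep_congr this
    intro u
    rw [pow_succ]

lemma Rep_poly (p : Polynomial ℝ) :
    TRep p.natDegree (fun u => ((p.eval (Real.cos u) : ℝ) : ℂ)) := by
  have key : ∀ u : ℝ, ((p.eval (Real.cos u) : ℝ) : ℂ)
      = ∑ i ∈ Finset.range (p.natDegree + 1),
          ((p.coeff i : ℝ) : ℂ) * ((Real.cos u : ℝ) : ℂ)^i := by
    intro u
    rw [Polynomial.eval_eq_sum_range]
    push_cast
    rfl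
  apply Rep_congr _ (fun u => (key u).symm)
  apply Rep_sum
  intro i hi
  rw [Finset.mem_range] at hi
  have : TRep i (fun u => ((p.coeff i : ℝ) : ℂ) * ((Real.cos u : ℝ) : ℂ)^i) :=
    Rep_cmul _ (Rep_cospow i)
  exact Rep_mono (by omega) this

lemma Rep_poly_sin (p : Polynomial ℝ) :
    TRep (p.natDegree + 1) (fun u => ((p.eval (Real.cos u) * Real.sin u : ℝ) : ℂ)) := by
  have := Rep_mul_sin (Rep_poly p)
  apply Rep_congr this
  intro u
  push_cast
  ring

lemma rep_deriv_bound {n : ℕ} (hn : 1 ≤ n) {f f' : ℝ → ℝ} {M : ℝ}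
    (h : TRep n (fun u => ((f u : ℝ) : ℂ))) (hder : ∀ u, HasDerivAt f (f' u) u)
    (hM : ∀ u, |f u| ≤ M) : ∀ θ, |f' θ| ≤ n * M := by
  obtain ⟨c, _, hc⟩ := h
  exact deriv_bound hn c f f' hc hder hM

lemma bern_cos {p : Polynomial ℝ} {n : ℕ} (hn : 1 ≤ n) (hdeg : p.natDegree ≤ n) {M : ℝ}
    (hM : ∀ x ∈ Set.Icc (-1:ℝ) 1, |p.eval x| ≤ M) :
    ∀ θ : ℝ, |(Polynomial.derivative p).eval (Real.cos θ) * Real.sin θ| ≤ n * M := by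
  set f : ℝ → ℝ := fun u => p.eval (Real.cos u) with hf
  set f' : ℝ → ℝ := fun u => -((Polynomial.derivative p).eval (Real.cos u) * Real.sin u) with hf'
  have hder : ∀ u, HasDerivAt f (f' u) u := by
    intro u
    have h := (p.hasDerivAt (Real.cos u)).comp u (Real.hasDerivAt_cos u)
    refine h.congr_deriv ?_
    simp [hf']
  have hrep : TRep n (fun u => ((f u : ℝ) : ℂ)) := Rep_mono hdeg (Rep_poly p)
  have hMf : ∀ u, |f u| ≤ M := fun u =>
    hM _ ⟨Real.neg_one_le_cos u, Real.cos_le_one u⟩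
  intro θ
  have := rep_deriv_bound hn hrep hder hMf θ
  rwa [hf', abs_neg] at this

lemma bern_sin {q : Polynomial ℝ} {n : ℕ} (hn : 1 ≤ n) (hdeg : q.natDegree + 1 ≤ n) {C : ℝ}
    (hq : ∀ θ : ℝ, |q.eval (Real.cos θ) * Real.sin θ| ≤ C) :
    ∀ θ : ℝ, |q.eval (Real.cos θ) * Real.cos θ
      - (Polynomial.derivative q).eval (Real.cos θ) * Real.sin θ ^ 2| ≤ n * C := by
  set f : ℝ → ℝ := fun u => q.eval (Real.cos u) * Real.sin u with hf
  set f' : ℝ → ℝ := fun u => q.eval (Real.cos u) * Real.cos u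
      - (Polynomial.derivative q).eval (Real.cos u) * Real.sin u ^ 2 with hf'
  have hder : ∀ u, HasDerivAt f (f' u) u := by
    intro u
    have h1 := (q.hasDerivAt (Real.cos u)).comp u (Real.hasDerivAt_cos u)
    have h2 := h1.mul (Real.hasDerivAt_sin u)
    refine h2.congr_deriv ?_
    simp only [hf', Function.comp_apply, Function.comp]
    ring
  have hrep : TRep n (fun u => ((f u : ℝ) : ℂ)) := Rep_mono hdeg (Rep_poly_sin q)
  exact rep_deriv_bound hn hrep hder hq

lemma mvt_bound {f f' : ℝ → ℝ} (hder : ∀ u, HasDerivAt f (f' u) u) {K : ℝ}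
    (hK : ∀ u, |f' u| ≤ K) {a b : ℝ} (hab : a ≤ b) : |f b - f a| ≤ K * (b - a) := by
  have := norm_image_sub_le_of_norm_deriv_le_segment'
    (f := f) (f' := f') (a := a) (b := b) (C := K)
    (fun x _ => (hder x).hasDerivWithinAt) (fun x _ => hK x) b (Set.right_mem_Icc.mpr hab)
  simpa [Real.norm_eq_abs] using this

lemma schur_arith {n : ℕ} (hn : 1 ≤ n) {C ψ Q : ℝ} (hψ0 : 0 < ψ) (hψ : ψ ≤ π/2)
    (hQ : 0 ≤ Q) (hC : 0 ≤ C) (h1 : Q * Real.sin ψ ≤ C) (h2 : Q * Real.sin ψ ≤ n*C*ψ) :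
    Q ≤ 4/3 * n * C := by
  have hn' : (1:ℝ) ≤ n := by exact_mod_cast hn
  have hn0 : (0:ℝ) < n := by positivity
  rcases le_or_gt ψ (1/(n:ℝ)) with hcase | hcase
  · have hψ1 : ψ ≤ 1 := hcase.trans (by rw [div_le_one (by positivity)]; exact hn')
    have hsin := Real.sin_gt_sub_cube hψ0
    have hsq : ψ^2 ≤ 1 := by nlinarith
    have hcube : ψ^3 ≤ ψ := by nlinarith [mul_le_mul_of_nonneg_left hsq hψ0.le]
    have h34 : (3/4) * ψ ≤ Real.sin ψ := by linarith
    have hA : (3/4) * Q * ψ ≤ (n:ℝ)*C*ψ := by nlinarith [mul_le_mul_of_nonneg_left h34 hQ]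
    have hB : (3/4) * Q ≤ (n:ℝ)*C := le_of_mul_le_mul_right (by linarith) hψ0
    linarith
  · have h1n : 0 < 1/(n:ℝ) := by positivity
    have h1n1 : 1/(n:ℝ) ≤ 1 := by rw [div_le_one (by positivity)]; exact hn'
    have hsin1 := Real.sin_gt_sub_cube h1n
    have hmono : Real.sin (1/(n:ℝ)) ≤ Real.sin ψ := by
      apply Real.strictMonoOn_sin.monotoneOn ⟨by linarith, by linarith⟩
        ⟨by linarith, hψ⟩ hcase.le
    have hsq : (1/(n:ℝ))^2 ≤ 1 := by nlinarith
    have hcube : (1/(n:ℝ))^3 ≤ 1/(n:ℝ) := by nlinarith [mul_le_mul_of_nonneg_left hsq h1n.le]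
    have h34 : (3/4) * (1/(n:ℝ)) ≤ Real.sin ψ := by linarith
    have hA : (3/4) * (1/(n:ℝ)) * Q ≤ C := by nlinarith [mul_le_mul_of_nonneg_left h34 hQ]
    calc Q = (4/3)*(n:ℝ)*((3/4)*(1/(n:ℝ))*Q) := by field_simp
      _ ≤ (4/3)*(n:ℝ)*C := by
          apply mul_le_mul_of_nonneg_left hA (by positivity)
      _ = 4/3*(n:ℝ)*C := by ring

lemma schur {q : Polynomial ℝ} {n : ℕ} (hn : 1 ≤ n) (hdeg : q.natDegree + 1 ≤ n) {C : ℝ}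
    (hq : ∀ θ : ℝ, |q.eval (Real.cos θ) * Real.sin θ| ≤ C) :
    ∀ x ∈ Set.Icc (-1:ℝ) 1, |q.eval x| ≤ 4/3 * n * C := by
  have hC : 0 ≤ C := le_trans (abs_nonneg _) (hq 0)
  set f : ℝ → ℝ := fun u => q.eval (Real.cos u) * Real.sin u with hf
  set f' : ℝ → ℝ := fun u => q.eval (Real.cos u) * Real.cos u
      - (Polynomial.derivative q).eval (Real.cos u) * Real.sin u ^ 2 with hf'
  have hder : ∀ u, HasDerivAt f (f' u) u := by
    intro u
    have h1 := (q.hasDerivAt (Real.cos u)).comp u (Real.hasDerivAt_cos u)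
    have h2 := h1.mul (Real.hasDerivAt_sin u)
    refine h2.congr_deriv ?_
    simp only [hf', Function.comp_apply, Function.comp]
    ring
  have hK : ∀ u, |f' u| ≤ n * C := bern_sin hn hdeg hq
  have hopen : ∀ x ∈ Set.Ioo (-1:ℝ) 1, |q.eval x| ≤ 4/3 * n * C := by
    rintro x ⟨hx1, hx2⟩
    set θ := Real.arccos x with hθ
    have hθ0 : 0 < θ := Real.arccos_pos.mpr hx2
    have hθπ : θ ≤ π := Real.arccos_le_pi x
    have hcos : Real.cos θ = x := Real.cos_arccos hx1.le hx2.le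
    have hsinθ : 0 < Real.sin θ := by
      apply Real.sin_pos_of_pos_of_lt_pi hθ0
      rcases lt_or_eq_of_le hθπ with h | h
      · exact h
      · exfalso
        have : Real.cos θ = -1 := by rw [h]; exact Real.cos_pi
        rw [hcos] at this; linarith
    have hf0 : f 0 = 0 := by simp [hf]
    have hfπ : f π = 0 := by simp [hf]
    have habs : |q.eval x| * Real.sin θ = |f θ| := by
      rw [hf]
      simp only [hcos]
      rw [abs_mul, abs_of_pos hsinθ]
    have hb3 : |f θ| ≤ C := by rw [hf]; simp only [hcos]; rw [← hcos]; exact hq θ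
    rcases le_or_gt θ (π/2) with hhalf | hhalf
    · have hb2 : |f θ| ≤ (n*C) * θ := by
        have := mvt_bound hder hK hθ0.le
        rwa [hf0, sub_zero, sub_zero] at this
      apply schur_arith hn hθ0 hhalf (abs_nonneg _) hC (by linarith [habs]) ?_
      rw [habs]
      calc |f θ| ≤ (n*C)*θ := hb2
        _ = n*C*θ := by ring
    · set ψ := π - θ with hψdef
      have hψ0 : 0 < ψ := by
        rcases lt_or_eq_of_le hθπ with h | h
        · simp [hψdef]; linarith
        · exfalso
          have : Real.cos θ = -1 := by rw [h]; exact Real.cos_pi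
          rw [hcos] at this; linarith
      have hψhalf : ψ ≤ π/2 := by simp [hψdef]; linarith
      have hsinψ : Real.sin ψ = Real.sin θ := Real.sin_pi_sub θ
      have hb2 : |f θ| ≤ (n*C) * ψ := by
        have h := mvt_bound hder hK (show θ ≤ π by linarith)
        rw [hfπ, zero_sub, abs_neg] at h
        calc |f θ| ≤ (n:ℝ)*C*(π - θ) := h
          _ = (n*C)*ψ := by rw [hψdef]
      apply schur_arith hn hψ0 hψhalf (abs_nonneg _) hC ?_ ?_
      · rw [hsinψ, habs]; exact hb3
      · rw [hsinψ, habs]; exact hb2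
  -- extend to the closed interval by continuity
  intro x hx
  have hIcc : Set.Icc (-1:ℝ) 1 = closure (Set.Ioo (-1:ℝ) 1) := (closure_Ioo (by norm_num)).symm
  have hsubset : closure (Set.Ioo (-1:ℝ) 1) ⊆ {y : ℝ | |q.eval y| ≤ 4/3 * n * C} :=
    closure_minimal hopen (isClosed_le (Polynomial.continuous q).abs continuous_const)
  exact hsubset (hIcc ▸ hx)

lemma markov {p : Polynomial ℝ} {n : ℕ} (hn : 1 ≤ n) (hdeg : p.natDegree ≤ n) {M : ℝ}
    (hM : ∀ x ∈ Set.Icc (-1:ℝ) 1, |p.eval x| ≤ M) :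
    ∀ x ∈ Set.Icc (-1:ℝ) 1, |(Polynomial.derivative p).eval x| ≤ 4/3 * (n:ℝ)^2 * M := by
  have hq := bern_cos hn hdeg hM
  have hdeg' : (Polynomial.derivative p).natDegree + 1 ≤ n := by
    have := p.natDegree_derivative_le
    omega
  have hsch := schur hn hdeg' hq
  intro x hx
  have h := hsch x hx
  have he : 4/3*(n:ℝ)*((n:ℝ)*M) = 4/3*(n:ℝ)^2*M := by ring
  linarith

lemma poly_mvt {B : Polynomial ℝ} {K a b : ℝ} (hab : a ≤ b)
    (hK : ∀ x ∈ Set.Icc a b, |(Polynomial.derivative B).eval x| ≤ K) :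
    |B.eval b - B.eval a| ≤ K * (b - a) := by
  have := norm_image_sub_le_of_norm_deriv_le_segment'
    (f := fun t => B.eval t) (f' := fun t => (Polynomial.derivative B).eval t)
    (a := a) (b := b) (C := K)
    (fun t _ => (B.hasDerivAt t).hasDerivWithinAt)
    (fun t ht => by simpa [Real.norm_eq_abs] using hK t (Set.Ico_subset_Icc_self ht))
    b (Set.right_mem_Icc.mpr hab)
  simpa [Real.norm_eq_abs] using this

/-- The compact set `E = {(x,y) : y³ = (1-x²)y, x ∈ [-1,1]}`. -/
def E8 : Set (ℝ × ℝ) := {p | p.2 ^ 3 = (1 - p.1 ^ 2) * p.2 ∧ p.1 ∈ Set.Icc (-1 : ℝ) 1}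

set_option maxHeartbeats 2000000 in
/-- For `P(x,y) = G₀(x) + G₁(x)y + G₂(x)y²`, one has
`sup_E |∂P/∂x| ≤ 6 (deg P)² sup_E |P|`. -/
theorem markov_x_on_E8 (G₀ G₁ G₂ : Polynomial ℝ) (C : ℝ)
    (hC : ∀ p ∈ E8, |G₀.eval p.1 + G₁.eval p.1 * p.2 + G₂.eval p.1 * p.2 ^ 2| ≤ C) :
    ∀ p ∈ E8,
      |(Polynomial.derivative G₀).eval p.1 + (Polynomial.derivative G₁).eval p.1 * p.2 +
          (Polynomial.derivative G₂).eval p.1 * p.2 ^ 2|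
        ≤ 6 * ((max (max G₀.natDegree (G₁.natDegree + 1)) (G₂.natDegree + 2) : ℕ) : ℝ) ^ 2 * C := by
  set d : ℕ := max (max G₀.natDegree (G₁.natDegree + 1)) (G₂.natDegree + 2) with hd
  have hd1 : 1 ≤ d := le_trans (by omega) (le_max_right _ _)
  have hdG0 : G₀.natDegree ≤ d := le_trans (le_max_left _ _) (le_max_left _ _)
  have hdG1 : G₁.natDegree + 1 ≤ d := le_trans (le_max_right _ _) (le_max_left _ _)
  have hdG2 : G₂.natDegree + 2 ≤ d := le_max_right _ _
  have hC0 : 0 ≤ C := le_trans (abs_nonneg _)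
    (hC (0,0) ⟨by norm_num, by norm_num⟩)
  have hdC : 0 ≤ (d:ℝ)^2 * C := by positivity
  -- the segment part of E8
  have hseg : ∀ t ∈ Set.Icc (-1:ℝ) 1, |G₀.eval t| ≤ C := by
    intro t ht
    have := hC (t, 0) ⟨by norm_num, ht⟩
    simpa using this
  -- the circle part of E8
  have hcirc : ∀ θ : ℝ, |G₀.eval (Real.cos θ) + G₁.eval (Real.cos θ) * Real.sin θ
      + G₂.eval (Real.cos θ) * Real.sin θ ^ 2| ≤ C := by
    intro θ
    refine hC (Real.cos θ, Real.sin θ) ⟨?_, ⟨Real.neg_one_le_cos θ, Real.cos_le_one θ⟩⟩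
    have h := Real.sin_sq_add_cos_sq θ
    simp only
    linear_combination Real.sin θ * h
  have hG1b : ∀ θ : ℝ, |G₁.eval (Real.cos θ) * Real.sin θ| ≤ C := by
    intro θ
    have h1 := hcirc θ
    have h2 := hcirc (-θ)
    rw [Real.cos_neg, Real.sin_neg] at h2
    rw [abs_le] at h1 h2 ⊢
    constructor <;> nlinarith [h1.1, h1.2, h2.1, h2.2]
  set B : Polynomial ℝ := G₂ * (1 - Polynomial.X^2) with hB_def
  set A : Polynomial ℝ := G₀ + B with hA_def
  have hBeval : ∀ t : ℝ, B.eval t = G₂.eval t * (1 - t^2) := by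
    intro t; rw [hB_def]; simp
  have hAeval : ∀ t : ℝ, A.eval t = G₀.eval t + G₂.eval t * (1 - t^2) := by
    intro t; rw [hA_def]; simp [hBeval t]
  have hsin_sq : ∀ θ : ℝ, Real.sin θ ^ 2 = 1 - Real.cos θ ^ 2 := by
    intro θ; have := Real.sin_sq_add_cos_sq θ; linarith
  have hAb : ∀ t ∈ Set.Icc (-1:ℝ) 1, |A.eval t| ≤ C := by
    intro t ht
    set θ := Real.arccos t with hθ
    have hcos : Real.cos θ = t := Real.cos_arccos ht.1 ht.2
    have h1 := hcirc θ
    have h2 := hcirc (-θ)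
    rw [Real.cos_neg, Real.sin_neg] at h2
    simp only [neg_sq] at h2
    rw [hcos] at h1 h2
    have hs2 : Real.sin θ ^ 2 = 1 - t^2 := by rw [hsin_sq, hcos]
    rw [hs2] at h1 h2
    rw [hAeval, abs_le]
    rw [abs_le] at h1 h2
    constructor <;> nlinarith [h1.1, h1.2, h2.1, h2.2]
  have hBb : ∀ t ∈ Set.Icc (-1:ℝ) 1, |B.eval t| ≤ 2*C := by
    intro t ht
    have h1 := hAb t ht
    have h2 := hseg t ht
    rw [hAeval] at h1
    rw [hBeval]
    rw [abs_le] at h1 h2 ⊢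
    constructor <;> nlinarith [h1.1, h1.2, h2.1, h2.2]
  have hdeg1X : (1 - Polynomial.X^2 : Polynomial ℝ).natDegree ≤ 2 := by
    refine le_trans (Polynomial.natDegree_sub_le _ _) ?_
    simp [Polynomial.natDegree_one, Polynomial.natDegree_X_pow]
  have hdegB : B.natDegree ≤ d := by
    rw [hB_def]
    refine le_trans (Polynomial.natDegree_mul_le) ?_
    omega
  have hdegA : A.natDegree ≤ d := by
    rw [hA_def]
    exact le_trans (Polynomial.natDegree_add_le _ _) (max_le hdG0 hdegB)
  -- Markov bounds
  have hA' := markov hd1 hdegA hAb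
  have hB' := markov hd1 hdegB hBb
  have hG0' := markov hd1 hdG0 hseg
  -- Schur + Bernstein for G₁
  have hG1sup := schur hd1 hdG1 hG1b
  have hG1' := bern_cos hd1 (by omega : G₁.natDegree ≤ d) hG1sup
  -- now take a point of E8
  rintro p ⟨hy, hx⟩
  rcases eq_or_ne p.2 0 with h0 | h0
  · rw [h0]
    simp only [mul_zero, add_zero, ne_eq, OfNat.ofNat_ne_zero, not_false_eq_true,
      zero_pow, mul_zero, add_zero]
    have := hG0' p.1 hx
    nlinarith [this, hdC]
  · have hy2 : p.2^2 = 1 - p.1^2 := by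
      apply mul_right_cancel₀ h0
      linear_combination hy
    have hy2pos : 0 < p.2^2 := by positivity
    have hx2 : p.1^2 < 1 := by nlinarith
    have hx1 : -1 < p.1 := by nlinarith
    have hx1' : p.1 < 1 := by nlinarith
    obtain ⟨θ, hcos, hsin⟩ : ∃ θ, Real.cos θ = p.1 ∧ Real.sin θ = p.2 := by
      rcases le_or_gt 0 p.2 with hy0 | hy0
      · refine ⟨Real.arccos p.1, Real.cos_arccos hx1.le hx1'.le, ?_⟩
        rw [Real.sin_arccos, ← hy2, Real.sqrt_sq hy0]
      · refine ⟨-Real.arccos p.1, ?_, ?_⟩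
        · rw [Real.cos_neg]; exact Real.cos_arccos hx1.le hx1'.le
        · rw [Real.sin_neg, Real.sin_arccos, ← hy2,
            show p.2^2 = (-p.2)^2 by ring, Real.sqrt_sq (by linarith)]
          ring
    -- derivative identity
    have hder_eq : (Polynomial.derivative A).eval p.1
        = (Polynomial.derivative G₀).eval p.1
          + (Polynomial.derivative G₂).eval p.1 * (1 - p.1^2)
          - 2*p.1*(G₂.eval p.1) := by
      rw [hA_def, hB_def]
      simp [Polynomial.derivative_add, Polynomial.derivative_mul,
        Polynomial.derivative_sub, Polynomial.derivative_one, Polynomial.derivative_X_pow]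
      ring
    -- bound on |2 x G₂(x)|
    have h2xg2 : |2 * p.1 * G₂.eval p.1| ≤ 4/3*(d:ℝ)^2*(2*C) := by
      set K : ℝ := 4/3*(d:ℝ)^2*(2*C) with hK_def
      have hK0 : 0 ≤ K := by positivity
      have hBp : |B.eval p.1| = |G₂.eval p.1| * (1 - p.1^2) := by
        rw [hBeval, abs_mul, abs_of_pos (by nlinarith : (0:ℝ) < 1 - p.1^2)]
      have hB1 : B.eval 1 = 0 := by rw [hBeval]; ring
      have hBm1 : B.eval (-1) = 0 := by rw [hBeval]; ring
      have hup : |B.eval p.1| ≤ K * (1 - p.1) := by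
        have := poly_mvt (B := B) (a := p.1) (b := 1) hx1'.le
          (fun t ht => hB' t ⟨le_trans hx1.le ht.1, ht.2⟩)
        rw [hB1, zero_sub, abs_neg] at this
        exact this
      have hdown : |B.eval p.1| ≤ K * (p.1 + 1) := by
        have := poly_mvt (B := B) (a := -1) (b := p.1) hx1.le
          (fun t ht => hB' t ⟨ht.1, le_trans ht.2 hx1'.le⟩)
        rw [hBm1, sub_zero] at this
        calc |B.eval p.1| ≤ K * (p.1 - -1) := this
          _ = K * (p.1 + 1) := by ring
      set g : ℝ := |G₂.eval p.1| with hg_def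
      have hg0 : 0 ≤ g := abs_nonneg _
      rcases le_or_gt 0 p.1 with hsign | hsign
      · have h1m : 0 < 1 - p.1 := by linarith
        have hgK : g * (1 + p.1) ≤ K := by
          have hfac : g * (1 + p.1) * (1 - p.1) ≤ K * (1 - p.1) := by
            calc g * (1 + p.1) * (1 - p.1) = g * (1 - p.1^2) := by ring
              _ = |B.eval p.1| := hBp.symm
              _ ≤ K * (1 - p.1) := hup
          exact le_of_mul_le_mul_right hfac h1m
        calc |2 * p.1 * G₂.eval p.1| = 2*p.1*g := by
              rw [abs_mul, abs_of_nonneg (by linarith : (0:ℝ) ≤ 2*p.1)]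
          _ ≤ g * (1 + p.1) := by nlinarith
          _ ≤ K := hgK
      · have h1p : 0 < p.1 + 1 := by linarith
        have hgK : g * (1 - p.1) ≤ K := by
          have hfac : g * (1 - p.1) * (p.1 + 1) ≤ K * (p.1 + 1) := by
            calc g * (1 - p.1) * (p.1 + 1) = g * (1 - p.1^2) := by ring
              _ = |B.eval p.1| := hBp.symm
              _ ≤ K * (p.1 + 1) := hdown
          exact le_of_mul_le_mul_right hfac h1p
        calc |2 * p.1 * G₂.eval p.1| = 2*(-p.1)*g := by
              rw [abs_mul, abs_of_nonpos (by linarith : 2*p.1 ≤ (0:ℝ))]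
              ring
          _ ≤ g * (1 - p.1) := by nlinarith
          _ ≤ K := hgK
    -- assemble
    have hAx := hA' p.1 hx
    have hG1x : |(Polynomial.derivative G₁).eval p.1 * p.2| ≤ (d:ℝ) * (4/3*(d:ℝ)*C) := by
      have := hG1' θ
      rwa [hcos, hsin] at this
    have hkey : (Polynomial.derivative G₀).eval p.1
        + (Polynomial.derivative G₁).eval p.1 * p.2
        + (Polynomial.derivative G₂).eval p.1 * p.2 ^ 2
        = ((Polynomial.derivative A).eval p.1 + 2*p.1*(G₂.eval p.1))
          + (Polynomial.derivative G₁).eval p.1 * p.2 := by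
      rw [hder_eq, hy2]
      ring
    rw [hkey]
    have htri : |((Polynomial.derivative A).eval p.1 + 2*p.1*(G₂.eval p.1))
        + (Polynomial.derivative G₁).eval p.1 * p.2|
        ≤ |(Polynomial.derivative A).eval p.1| + |2*p.1*(G₂.eval p.1)|
          + |(Polynomial.derivative G₁).eval p.1 * p.2| := by
      calc _ ≤ |(Polynomial.derivative A).eval p.1 + 2*p.1*(G₂.eval p.1)|
            + |(Polynomial.derivative G₁).eval p.1 * p.2| := abs_add_le _ _
        _ ≤ _ := by
            have := abs_add_le ((Polynomial.derivative A).eval p.1) (2*p.1*(G₂.eval p.1))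
            linarith
    nlinarith [htri, hAx, h2xg2, hG1x, hdC]
end

section
/- Let V = {(x,y) ∈ ℝ² : y³ = (1-x²)y} and E = {(x,y) ∈ V : x ∈ [-1,1]}. For every polynomial P(x,y) = G₀(x) + G₁(x)y + G₂(x)y², one has sup_E |∂P/∂y| ≤ 2 (deg P)² sup_E |P|. -/
noncomputable section
namespace MK9
open Finset

/-- The character `θ ↦ exp(i k θ)`. -/
def ch (k : ℤ) (θ : ℝ) : ℂ := Complex.exp ((k * θ : ℝ) * Complex.I)

/-- Chebyshev-type nodes `τ_j = (2j+1)π/(2M)`. -/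
def tau (M : ℕ) (j : ℕ) : ℝ := (2 * j + 1) * Real.pi / (2 * M)

lemma ch_mul (k l : ℤ) (θ : ℝ) : ch k θ * ch l θ = ch (k + l) θ := by
  unfold ch
  rw [← Complex.exp_add]
  congr 1
  push_cast
  ring

lemma ch_zero (θ : ℝ) : ch 0 θ = 1 := by
  unfold ch; norm_num

lemma ch_sub (k : ℤ) (a b : ℝ) : ch k (a - b) = ch k a * ch (-k) b := by
  unfold ch
  rw [← Complex.exp_add]
  congr 1
  push_cast
  ring

lemma ch_eq (k : ℤ) (θ : ℝ) :
    ch k θ = (Real.cos (k * θ) : ℂ) + (Real.sin (k * θ) : ℂ) * Complex.I := by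
  unfold ch
  rw [Complex.exp_mul_I]
  simp [Complex.ofReal_cos, Complex.ofReal_sin]

lemma ch_abs (k : ℤ) (θ : ℝ) : ‖ch k θ‖ = 1 := by
  unfold ch; exact Complex.norm_exp_ofReal_mul_I _

lemma char_sum (M : ℕ) (hM : 1 ≤ M) (r : ℤ) (hr : r.natAbs < 2 * M) :
    ∑ j ∈ range (2 * M), ch r (tau M j) = if r = 0 then (2 * M : ℂ) else 0 := by
  rcases eq_or_ne r 0 with h0 | h0
  · subst h0
    simp [ch_zero]
  · rw [if_neg h0]
    have hM0 : (M : ℝ) ≠ 0 := by positivity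
    have hterm : ∀ j : ℕ, ch r (tau M j) =
        Complex.exp ((r * Real.pi / (2 * M) : ℝ) * Complex.I) *
          (Complex.exp ((r * Real.pi / M : ℝ) * Complex.I)) ^ j := by
      intro j
      unfold ch tau
      rw [← Complex.exp_nat_mul, ← Complex.exp_add]
      congr 1
      push_cast
      field_simp
      ring
    rw [Finset.sum_congr rfl fun j _ => hterm j, ← Finset.mul_sum]
    have hne : Complex.exp ((r * Real.pi / M : ℝ) * Complex.I) ≠ 1 := by
      intro hexp
      rw [Complex.exp_eq_one_iff] at hexp
      obtain ⟨n, hn⟩ := hexp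
      have hn' : ((r * Real.pi / M : ℝ) : ℂ) * Complex.I = ((n * (2 * Real.pi) : ℝ) : ℂ) * Complex.I := by
        push_cast at hn ⊢
        linear_combination hn
      have h3 : (r * Real.pi / M : ℝ) = n * (2 * Real.pi) := by
        exact_mod_cast mul_right_cancel₀ Complex.I_ne_zero hn'
      have hpi : Real.pi ≠ 0 := Real.pi_ne_zero
      rw [div_eq_iff hM0] at h3
      have h4 : (r : ℝ) = (n * (2 * M) : ℤ) := by
        apply mul_right_cancel₀ hpi
        push_cast
        linear_combination h3
      have h5 : r = n * (2 * M) := by exact_mod_cast h4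
      have h6 : r.natAbs = n.natAbs * (2 * M) := by
        rw [h5, Int.natAbs_mul]
        have : (2 * (M:ℤ)).natAbs = 2 * M := by omega
        rw [this]
      have h7 : 1 ≤ n.natAbs := by
        rcases eq_or_ne n 0 with hn0 | hn0
        · subst hn0
          simp at h5
          exact absurd h5 h0
        · exact Int.natAbs_pos.mpr hn0
      nlinarith [hr, h6, h7]
    rw [geom_sum_eq hne]
    have hnum : Complex.exp ((r * Real.pi / M : ℝ) * Complex.I) ^ (2 * M) = 1 := by
      rw [← Complex.exp_nat_mul]
      have hMC : (M : ℂ) ≠ 0 := by exact_mod_cast Nat.cast_ne_zero.mpr (by omega)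
      have : ((2 * M : ℕ) : ℂ) * (((r * Real.pi / M : ℝ) : ℂ) * Complex.I) =
          (r : ℂ) * (2 * (Real.pi : ℂ) * Complex.I) := by
        push_cast
        field_simp
      rw [this]
      exact_mod_cast Complex.exp_int_mul_two_pi_mul_I r
    rw [hnum]
    simp
/-- Span of characters with frequency at most `m`. -/
def V (m : ℕ) : Submodule ℂ (ℝ → ℂ) :=
  Submodule.span ℂ {f : ℝ → ℂ | ∃ k : ℤ, k.natAbs ≤ m ∧ f = ch k}

lemma ch_mem {k : ℤ} {m : ℕ} (h : k.natAbs ≤ m) : ch k ∈ V m :=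
  Submodule.subset_span ⟨k, h, rfl⟩

lemma V_mono {m m' : ℕ} (h : m ≤ m') : V m ≤ V m' :=
  Submodule.span_mono (fun f ⟨k, hk, hf⟩ => ⟨k, hk.trans h, hf⟩)

lemma mul_ch_mem {m : ℕ} {f : ℝ → ℂ} (hf : f ∈ V m) (k : ℤ) :
    (fun θ => f θ * ch k θ) ∈ V (m + k.natAbs) := by
  induction hf using Submodule.span_induction with
  | mem g hg =>
      obtain ⟨l, hl, rfl⟩ := hg
      have : (fun θ => ch l θ * ch k θ) = ch (l + k) := by
        funext θ; rw [ch_mul]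
      rw [this]
      exact ch_mem (le_trans (Int.natAbs_add_le l k) (by omega))
  | zero =>
      have : (fun θ => (0 : ℝ → ℂ) θ * ch k θ) = 0 := by funext θ; simp
      rw [this]; exact Submodule.zero_mem _
  | add g h _ _ hg hh =>
      have : (fun θ => (g + h) θ * ch k θ) =
          (fun θ => g θ * ch k θ) + fun θ => h θ * ch k θ := by
        funext θ; simp [add_mul]
      rw [this]; exact Submodule.add_mem _ hg hh
  | smul c g _ hg =>
      have : (fun θ => (c • g) θ * ch k θ) = c • fun θ => g θ * ch k θ := by
        funext θ; simp [mul_assoc]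
      rw [this]; exact Submodule.smul_mem _ _ hg

lemma cos_ch (θ : ℝ) : ((Real.cos θ : ℝ) : ℂ) = (ch 1 θ + ch (-1) θ) / 2 := by
  rw [ch_eq, ch_eq]
  push_cast
  rw [one_mul, neg_one_mul, Complex.cos_neg, Complex.sin_neg]
  ring

lemma sin_ch (θ : ℝ) : ((Real.sin θ : ℝ) : ℂ) = (ch 1 θ - ch (-1) θ) / (2 * Complex.I) := by
  rw [ch_eq, ch_eq]
  push_cast
  rw [one_mul, neg_one_mul, Complex.cos_neg, Complex.sin_neg]
  rw [eq_div_iff (by simp [Complex.I_ne_zero] : (2:ℂ) * Complex.I ≠ 0)]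
  ring_nf

lemma mul_cos_mem {m : ℕ} {f : ℝ → ℂ} (hf : f ∈ V m) :
    (fun θ => f θ * ((Real.cos θ : ℝ) : ℂ)) ∈ V (m + 1) := by
  have h1 := mul_ch_mem hf 1
  have h2 := mul_ch_mem hf (-1)
  have : (fun θ => f θ * ((Real.cos θ : ℝ) : ℂ)) =
      (2⁻¹ : ℂ) • ((fun θ => f θ * ch 1 θ) + fun θ => f θ * ch (-1) θ) := by
    funext θ
    simp only [Pi.smul_apply, Pi.add_apply, smul_eq_mul, cos_ch]
    ring
  rw [this]
  exact Submodule.smul_mem _ _ (Submodule.add_mem _ (by simpa using h1) (by simpa using h2))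

lemma mul_sin_mem {m : ℕ} {f : ℝ → ℂ} (hf : f ∈ V m) :
    (fun θ => f θ * ((Real.sin θ : ℝ) : ℂ)) ∈ V (m + 1) := by
  have h1 := mul_ch_mem hf 1
  have h2 := mul_ch_mem hf (-1)
  have : (fun θ => f θ * ((Real.sin θ : ℝ) : ℂ)) =
      ((2 * Complex.I)⁻¹ : ℂ) • ((fun θ => f θ * ch 1 θ) - fun θ => f θ * ch (-1) θ) := by
    funext θ
    simp only [Pi.smul_apply, Pi.sub_apply, smul_eq_mul, sin_ch]
    field_simp
  rw [this]
  exact Submodule.smul_mem _ _ (Submodule.sub_mem _ (by simpa using h1) (by simpa using h2))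

lemma one_mem (m : ℕ) : (fun _ : ℝ => (1:ℂ)) ∈ V m := by
  have : (fun _ : ℝ => (1:ℂ)) = ch 0 := by
    funext θ; unfold ch; norm_num
  rw [this]; exact ch_mem (by simp)

lemma cospow_mem (n : ℕ) : (fun θ : ℝ => ((Real.cos θ : ℝ) : ℂ) ^ n) ∈ V n := by
  induction n with
  | zero => simpa using one_mem 0
  | succ n ih =>
      have := mul_cos_mem ih
      have heq : (fun θ : ℝ => ((Real.cos θ : ℝ) : ℂ) ^ (n+1)) =
          (fun θ => ((Real.cos θ : ℝ) : ℂ) ^ n * ((Real.cos θ : ℝ) : ℂ)) := by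
        funext θ; ring
      rw [heq]; exact this

lemma evalcos_mem (g : Polynomial ℝ) {m : ℕ} (hm : g.natDegree ≤ m) :
    (fun θ : ℝ => ((g.eval (Real.cos θ) : ℝ) : ℂ)) ∈ V m := by
  have heq : (fun θ : ℝ => ((g.eval (Real.cos θ) : ℝ) : ℂ)) =
      fun θ : ℝ => ∑ n ∈ range (g.natDegree + 1),
        ((g.coeff n : ℝ) : ℂ) * ((Real.cos θ : ℝ) : ℂ) ^ n := by
    funext θ
    rw [Polynomial.eval_eq_sum_range]
    push_cast
    rfl
  rw [heq]
  have : (fun θ : ℝ => ∑ n ∈ range (g.natDegree + 1),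
        ((g.coeff n : ℝ) : ℂ) * ((Real.cos θ : ℝ) : ℂ) ^ n) =
      ∑ n ∈ range (g.natDegree + 1),
        ((g.coeff n : ℝ) : ℂ) • (fun θ : ℝ => ((Real.cos θ : ℝ) : ℂ) ^ n) := by
    funext θ
    simp
  rw [this]
  apply Submodule.sum_mem
  intro n hn
  apply Submodule.smul_mem
  apply V_mono _ (cospow_mem n)
  simp only [mem_range] at hn
  omega

lemma ch_re (k : ℤ) (t : ℝ) : (ch k t).re = Real.cos (k * t) := by
  rw [ch_eq]
  simp only [Complex.add_re, Complex.ofReal_re, Complex.mul_re, Complex.ofReal_im,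
    Complex.I_re, Complex.I_im]
  ring

lemma ch_im (k : ℤ) (t : ℝ) : (ch k t).im = Real.sin (k * t) := by
  rw [ch_eq]
  simp only [Complex.add_im, Complex.ofReal_im, Complex.mul_im, Complex.ofReal_re,
    Complex.I_re, Complex.I_im]
  ring

/-- Dirichlet kernel of order `M-1`, written with `range (2M-1)`. -/
def Dk (M : ℕ) (t : ℝ) : ℂ := ∑ k ∈ range (2 * M - 1), ch ((k : ℤ) - ((M : ℤ) - 1)) t

/-- Interpolation identity: quadrature of `f` against the Dirichlet kernel. -/
lemma interp {M : ℕ} (hM : 1 ≤ M) {f : ℝ → ℂ} (hf : f ∈ V (M - 1)) (φ : ℝ) :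
    (2 * M : ℂ) * f φ = ∑ j ∈ range (2 * M), Dk M (tau M j - φ) * f (tau M j) := by
  induction hf using Submodule.span_induction with
  | mem g hg =>
      obtain ⟨l, hl, rfl⟩ := hg
      have hl' : l.natAbs ≤ M - 1 := hl
      have hstep : ∀ j : ℕ, Dk M (tau M j - φ) * ch l (tau M j) =
          ∑ k ∈ range (2 * M - 1),
            ch (-((k : ℤ) - ((M : ℤ) - 1))) φ * ch (((k : ℤ) - ((M : ℤ) - 1)) + l) (tau M j) := by
        intro j
        unfold Dk
        rw [Finset.sum_mul]
        refine Finset.sum_congr rfl fun k _ => ?_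
        rw [ch_sub, ← ch_mul]
        ring
      rw [Finset.sum_congr rfl fun j _ => hstep j, Finset.sum_comm]
      have hinner : ∀ k ∈ range (2 * M - 1),
          (∑ j ∈ range (2 * M),
            ch (-((k : ℤ) - ((M : ℤ) - 1))) φ * ch (((k : ℤ) - ((M : ℤ) - 1)) + l) (tau M j)) =
          if k = (((M : ℤ) - 1) - l).toNat then (2 * M : ℂ) * ch l φ else 0 := by
        intro k hk
        simp only [mem_range] at hk
        rw [← Finset.mul_sum, char_sum M hM _ (by omega)]
        by_cases hc : ((k : ℤ) - ((M : ℤ) - 1)) + l = 0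
        · rw [if_pos hc, if_pos (by omega)]
          have : -((k : ℤ) - ((M : ℤ) - 1)) = l := by omega
          rw [this]
          ring
        · rw [if_neg hc, if_neg (by omega), mul_zero]
      rw [Finset.sum_congr rfl hinner, Finset.sum_ite_eq' (range (2 * M - 1))]
      rw [if_pos (by simp only [mem_range]; omega)]

  | zero => simp
  | add g h _ _ hg hh =>
      simp only [Pi.add_apply, mul_add]
      rw [hg, hh, ← Finset.sum_add_distrib]
  | smul c g _ hg =>
      simp only [Pi.smul_apply, smul_eq_mul]
      calc (2 * M : ℂ) * (c * g φ) = c * ((2 * M : ℂ) * g φ) := by ring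
      _ = c * ∑ j ∈ range (2 * M), Dk M (tau M j - φ) * g (tau M j) := by rw [hg]
      _ = _ := by rw [Finset.mul_sum]; exact Finset.sum_congr rfl fun j _ => by ring

/-- Generic computation of `∑_j (∑_k c_k ch(ν k) τ_j)²` under a pairing `σ`. -/
lemma sum_sq_nodes {M : ℕ} (hM : 1 ≤ M) (A : Finset ℕ) (c : ℕ → ℂ) (ν : ℕ → ℤ)
    (hν : ∀ k ∈ A, (ν k).natAbs ≤ M - 1) (σ : ℕ → ℕ)
    (hσmem : ∀ k ∈ A, σ k ∈ A)
    (hσν : ∀ k ∈ A, ∀ k' ∈ A, (ν k + ν k' = 0 ↔ k' = σ k))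
    (hσc : ∀ k ∈ A, c k * c (σ k) = 1) :
    ∑ j ∈ range (2 * M), (∑ k ∈ A, c k * ch (ν k) (tau M j)) ^ 2 = (2 * M : ℂ) * A.card := by
  have hexp : ∀ j : ℕ, (∑ k ∈ A, c k * ch (ν k) (tau M j)) ^ 2 =
      ∑ k ∈ A, ∑ k' ∈ A, (c k * c k') * ch (ν k + ν k') (tau M j) := by
    intro j
    rw [sq, Finset.sum_mul_sum]
    refine Finset.sum_congr rfl fun k _ => Finset.sum_congr rfl fun k' _ => ?_
    rw [← ch_mul]
    ring
  rw [Finset.sum_congr rfl fun j _ => hexp j]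
  rw [Finset.sum_comm]
  have h1 : ∀ k ∈ A, (∑ j ∈ range (2 * M), ∑ k' ∈ A, (c k * c k') * ch (ν k + ν k') (tau M j))
      = (2 * M : ℂ) := by
    intro k hk
    rw [Finset.sum_comm]
    have h2 : ∀ k' ∈ A, (∑ j ∈ range (2 * M), (c k * c k') * ch (ν k + ν k') (tau M j))
        = if k' = σ k then (2 * M : ℂ) else 0 := by
      intro k' hk'
      rw [← Finset.mul_sum, char_sum M hM _ (by
        have := hν k hk; have := hν k' hk'; omega)]
      by_cases hc : ν k + ν k' = 0
      · rw [if_pos hc, if_pos ((hσν k hk k' hk').mp hc)]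
        have hk'' : k' = σ k := (hσν k hk k' hk').mp hc
        rw [hk'']
        rw [hσc k hk]
        ring
      · rw [if_neg hc, if_neg (fun h => hc ((hσν k hk k' hk').mpr h)), mul_zero]
    rw [Finset.sum_congr rfl h2, Finset.sum_ite_eq' A]
    rw [if_pos (hσmem k hk)]
  rw [Finset.sum_congr rfl h1, Finset.sum_const, nsmul_eq_mul]
  ring

lemma Dk_im (M : ℕ) (t : ℝ) : (Dk M t).im = 0 := by
  unfold Dk
  rw [Complex.im_sum]
  have h := Finset.sum_range_reflect
    (fun k : ℕ => (ch ((k : ℤ) - ((M : ℤ) - 1)) t).im) (2 * M - 1)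
  have h2 : ∀ k ∈ range (2 * M - 1),
      (ch (((2 * M - 1 - 1 - k : ℕ) : ℤ) - ((M : ℤ) - 1)) t).im
        = -(ch ((k : ℤ) - ((M : ℤ) - 1)) t).im := by
    intro k hk
    simp only [mem_range] at hk
    rw [ch_im, ch_im, ← Real.sin_neg]
    congr 1
    have : ((2 * M - 1 - 1 - k : ℕ) : ℤ) = 2 * M - 2 - k := by omega
    rw [this]
    push_cast
    ring
  rw [Finset.sum_congr rfl h2] at h
  rw [Finset.sum_neg_distrib] at h
  linarith [h]

def S0 (M : ℕ) : ℝ → ℂ := fun θ => ∑ l ∈ range M, ch ((M : ℤ) - 1 - 2 * l) θ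

lemma S0_im (M : ℕ) (t : ℝ) : (S0 M t).im = 0 := by
  unfold S0
  rw [Complex.im_sum]
  have h := Finset.sum_range_reflect
    (fun l : ℕ => (ch ((M : ℤ) - 1 - 2 * l) t).im) M
  have h2 : ∀ l ∈ range M,
      (ch ((M : ℤ) - 1 - 2 * ((M - 1 - l : ℕ) : ℤ)) t).im
        = -(ch ((M : ℤ) - 1 - 2 * l) t).im := by
    intro l hl
    simp only [mem_range] at hl
    rw [ch_im, ch_im, ← Real.sin_neg]
    congr 1
    have : ((M - 1 - l : ℕ) : ℤ) = (M : ℤ) - 1 - l := by omega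
    rw [this]
    push_cast
    ring
  rw [Finset.sum_congr rfl h2] at h
  rw [Finset.sum_neg_distrib] at h
  linarith [h]

lemma S0_mul_sin (M : ℕ) (θ : ℝ) :
    S0 M θ * ((Real.sin θ : ℝ) : ℂ) = ((Real.sin (M * θ) : ℝ) : ℂ) := by
  have htel : S0 M θ * (ch 1 θ - ch (-1) θ) = ch (M : ℤ) θ - ch (-(M : ℤ)) θ := by
    unfold S0
    rw [Finset.sum_mul]
    have hterm : ∀ l : ℕ, ch ((M : ℤ) - 1 - 2 * l) θ * (ch 1 θ - ch (-1) θ)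
        = ch ((M : ℤ) - 2 * l) θ - ch ((M : ℤ) - 2 * ((l + 1 : ℕ) : ℤ)) θ := by
      intro l
      rw [mul_sub, ch_mul, ch_mul]
      congr 2 <;> push_cast <;> ring
    rw [Finset.sum_congr rfl fun l _ => hterm l]
    rw [Finset.sum_range_sub' (fun l : ℕ => ch ((M : ℤ) - 2 * l) θ) M]
    congr 2
    push_cast
    ring
  have hsin : ((Real.sin θ : ℝ) : ℂ) = (ch 1 θ - ch (-1) θ) / (2 * Complex.I) := sin_ch θ
  have hsinM : ((Real.sin (M * θ) : ℝ) : ℂ) = (ch (M : ℤ) θ - ch (-(M : ℤ)) θ) / (2 * Complex.I) := by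
    rw [ch_eq, ch_eq]
    push_cast
    rw [show (-(M:ℂ)) * (θ:ℂ) = -((M:ℂ) * θ) by ring, Complex.cos_neg, Complex.sin_neg]
    rw [eq_div_iff (by simp [Complex.I_ne_zero] : (2:ℂ) * Complex.I ≠ 0)]
    ring_nf
  rw [hsin, hsinM, ← htel]
  field_simp

lemma sin_M_tau_sq (M : ℕ) (hM : 1 ≤ M) (j : ℕ) :
    Real.sin ((M : ℝ) * tau M j) ^ 2 = 1 := by
  have haux : ∀ n : ℕ, Real.sin (n * Real.pi + Real.pi / 2) ^ 2 = 1 := by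
    intro n
    induction n with
    | zero => simp
    | succ n ih =>
        have : ((n + 1 : ℕ) : ℝ) * Real.pi + Real.pi / 2
            = (n * Real.pi + Real.pi / 2) + Real.pi := by push_cast; ring
        rw [this, Real.sin_add_pi, neg_sq]
        exact ih
  have hM0 : (M : ℝ) ≠ 0 := by positivity
  have : (M : ℝ) * tau M j = j * Real.pi + Real.pi / 2 := by
    unfold tau
    field_simp
  rw [this]
  exact haux j

/-- the real part of `S0`, satisfying `S0re τ_j = ± csc τ_j`. -/
lemma S0_eq_re (M : ℕ) (θ : ℝ) : S0 M θ = (((S0 M θ).re : ℝ) : ℂ) :=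
  Complex.ext rfl (by rw [S0_im]; simp)

lemma Dk_eq_re (M : ℕ) (t : ℝ) : Dk M t = (((Dk M t).re : ℝ) : ℂ) :=
  Complex.ext rfl (by rw [Dk_im]; simp)

lemma S0re_sin_node (M : ℕ) (hM : 1 ≤ M) (j : ℕ) :
    ((S0 M (tau M j)).re * Real.sin (tau M j)) ^ 2 = 1 := by
  have h := S0_mul_sin M (tau M j)
  rw [S0_eq_re] at h
  have h2 : ((((S0 M (tau M j)).re * Real.sin (tau M j) : ℝ)) : ℂ)
      = ((Real.sin (M * tau M j) : ℝ) : ℂ) := by push_cast; push_cast at h; exact h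
  have h3 : (S0 M (tau M j)).re * Real.sin (tau M j) = Real.sin ((M : ℝ) * tau M j) := by
    exact_mod_cast h2
  rw [h3]
  exact sin_M_tau_sq M hM j

lemma sum_Dre_sq {M : ℕ} (hM : 1 ≤ M) (φ : ℝ) :
    ∑ j ∈ range (2 * M), ((Dk M (tau M j - φ)).re) ^ 2 = (2 * M) * (2 * M - 1 : ℕ) := by
  have hnodes := sum_sq_nodes hM (range (2 * M - 1))
      (fun k => ch (-((k : ℤ) - ((M : ℤ) - 1))) φ) (fun k => (k : ℤ) - ((M : ℤ) - 1))
      (fun k hk => by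
        simp only [mem_range] at hk
        show ((k : ℤ) - ((M : ℤ) - 1)).natAbs ≤ M - 1
        omega)
      (fun k => 2 * M - 2 - k)
      (fun k hk => by simp only [mem_range] at hk ⊢; omega)
      (fun k hk k' hk' => by
        simp only [mem_range] at hk hk'
        show ((k : ℤ) - ((M : ℤ) - 1)) + ((k' : ℤ) - ((M : ℤ) - 1)) = 0 ↔ k' = 2 * M - 2 - k
        omega)
      (fun k hk => by
        simp only [mem_range] at hk
        rw [ch_mul]
        have : -((k : ℤ) - ((M : ℤ) - 1)) + -(((2 * M - 2 - k : ℕ) : ℤ) - ((M : ℤ) - 1)) = 0 := by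
          omega
        rw [this, ch_zero])
  have hDk : ∀ j : ℕ, (∑ k ∈ range (2 * M - 1),
      ch (-((k : ℤ) - ((M : ℤ) - 1))) φ * ch ((k : ℤ) - ((M : ℤ) - 1)) (tau M j))
      = Dk M (tau M j - φ) := by
    intro j
    unfold Dk
    refine Finset.sum_congr rfl fun k _ => ?_
    rw [ch_sub]
    ring
  rw [Finset.sum_congr rfl (fun j _ => by rw [hDk j])] at hnodes
  rw [Finset.card_range] at hnodes
  have hre : ∀ j : ℕ, (Dk M (tau M j - φ)) ^ 2
      = ((((Dk M (tau M j - φ)).re ^ 2 : ℝ)) : ℂ) := by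
    intro j
    rw [Dk_eq_re M (tau M j - φ)]
    push_cast
    rfl
  rw [Finset.sum_congr rfl (fun j _ => hre j)] at hnodes
  rw [← Complex.ofReal_sum] at hnodes
  exact_mod_cast hnodes

lemma sum_S0re_sq {M : ℕ} (hM : 1 ≤ M) :
    ∑ j ∈ range (2 * M), ((S0 M (tau M j)).re) ^ 2 = (2 * M) * M := by
  have hnodes := sum_sq_nodes hM (range M)
      (fun _ => (1 : ℂ)) (fun l => (M : ℤ) - 1 - 2 * l)
      (fun l hl => by
        simp only [mem_range] at hl
        show ((M : ℤ) - 1 - 2 * l).natAbs ≤ M - 1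
        omega)
      (fun l => M - 1 - l)
      (fun l hl => by simp only [mem_range] at hl ⊢; omega)
      (fun l hl l' hl' => by
        simp only [mem_range] at hl hl'
        show ((M : ℤ) - 1 - 2 * l) + ((M : ℤ) - 1 - 2 * l') = 0 ↔ l' = M - 1 - l
        omega)
      (fun l hl => by norm_num)
  have hS0 : ∀ j : ℕ, (∑ l ∈ range M,
      (1 : ℂ) * ch ((M : ℤ) - 1 - 2 * l) (tau M j)) = S0 M (tau M j) := by
    intro j
    unfold S0
    refine Finset.sum_congr rfl fun l _ => by rw [one_mul]
  rw [Finset.sum_congr rfl (fun j _ => by rw [hS0 j])] at hnodes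
  rw [Finset.card_range] at hnodes
  have hre : ∀ j : ℕ, (S0 M (tau M j)) ^ 2
      = ((((S0 M (tau M j)).re ^ 2 : ℝ)) : ℂ) := by
    intro j
    rw [S0_eq_re M (tau M j)]
    push_cast
    rfl
  rw [Finset.sum_congr rfl (fun j _ => hre j)] at hnodes
  rw [← Complex.ofReal_sum] at hnodes
  exact_mod_cast hnodes

lemma abs_eq_abs_re {z : ℂ} (h : z.im = 0) : ‖z‖ = |z.re| := by
  conv_lhs => rw [show z = ((z.re : ℝ) : ℂ) from Complex.ext rfl (by simp [h])]
  exact (Complex.norm_real _).trans (Real.norm_eq_abs _)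

/-- The key quantitative bound: a trigonometric polynomial of degree `≤ M-1` whose
product with `sin` is bounded by `A` is itself bounded by `√2 M A` (squared form). -/
lemma key_bound {M : ℕ} (hM : 1 ≤ M) {f : ℝ → ℂ} (hf : f ∈ V (M - 1)) {s : ℝ → ℝ}
    (hs : ∀ θ, f θ = ((s θ : ℝ) : ℂ)) {A : ℝ} (hA : ∀ θ, |s θ * Real.sin θ| ≤ A) (φ : ℝ) :
    ((2 * M : ℝ) * |s φ|) ^ 2 ≤ A ^ 2 * ((2 * M) * (2 * M - 1 : ℕ)) * ((2 * M) * M) := by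
  have hA0 : 0 ≤ A := le_trans (abs_nonneg _) (hA 0)
  -- step 1 : |2M s φ| ≤ ∑ |Dk_j| |s τ_j|
  have h1 : (2 * M : ℝ) * |s φ| ≤
      ∑ j ∈ range (2 * M), |(Dk M (tau M j - φ)).re| * |s (tau M j)| := by
    have hi := interp hM hf φ
    have habs : ‖(2 * M : ℂ) * f φ‖ = (2 * M : ℝ) * |s φ| := by
      rw [hs φ, norm_mul]
      simp
    calc (2 * M : ℝ) * |s φ| = ‖(2 * M : ℂ) * f φ‖ := habs.symm
    _ = ‖∑ j ∈ range (2 * M), Dk M (tau M j - φ) * f (tau M j)‖ := by rw [hi]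
    _ ≤ ∑ j ∈ range (2 * M), ‖Dk M (tau M j - φ) * f (tau M j)‖ :=
        norm_sum_le _ _
    _ = ∑ j ∈ range (2 * M), |(Dk M (tau M j - φ)).re| * |s (tau M j)| := by
        refine Finset.sum_congr rfl fun j _ => ?_
        rw [norm_mul, hs (tau M j), Complex.norm_real, Real.norm_eq_abs, abs_eq_abs_re (Dk_im M (tau M j - φ))]
  -- step 2 : |s τ_j| ≤ A * |S0re τ_j|
  have h2 : ∀ j : ℕ, |s (tau M j)| ≤ A * |(S0 M (tau M j)).re| := by
    intro j
    have hnode := S0re_sin_node M hM j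
    have habs1 : |(S0 M (tau M j)).re * Real.sin (tau M j)| = 1 := by
      have := abs_eq_abs.mpr (Or.inl hnode)
      nlinarith [abs_nonneg ((S0 M (tau M j)).re * Real.sin (tau M j)),
        sq_abs ((S0 M (tau M j)).re * Real.sin (tau M j))]
    calc |s (tau M j)| = |s (tau M j)| * |(S0 M (tau M j)).re * Real.sin (tau M j)| := by
          rw [habs1, mul_one]
    _ = |s (tau M j) * Real.sin (tau M j)| * |(S0 M (tau M j)).re| := by
          rw [abs_mul, abs_mul]; ring
    _ ≤ A * |(S0 M (tau M j)).re| := by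
          apply mul_le_mul_of_nonneg_right (hA (tau M j)) (abs_nonneg _)
  -- step 3 : combine and Cauchy-Schwarz
  have h3 : (2 * M : ℝ) * |s φ| ≤
      A * ∑ j ∈ range (2 * M), |(Dk M (tau M j - φ)).re| * |(S0 M (tau M j)).re| := by
    rw [Finset.mul_sum]
    refine h1.trans (Finset.sum_le_sum fun j _ => ?_)
    calc |(Dk M (tau M j - φ)).re| * |s (tau M j)|
        ≤ |(Dk M (tau M j - φ)).re| * (A * |(S0 M (tau M j)).re|) :=
          mul_le_mul_of_nonneg_left (h2 j) (abs_nonneg _)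
    _ = A * (|(Dk M (tau M j - φ)).re| * |(S0 M (tau M j)).re|) := by ring
  have hCS := Finset.sum_mul_sq_le_sq_mul_sq (range (2 * M))
      (fun j => |(Dk M (tau M j - φ)).re|) (fun j => |(S0 M (tau M j)).re|)
  simp only [sq_abs] at hCS
  rw [sum_Dre_sq hM φ, sum_S0re_sq hM] at hCS
  have hT0 : 0 ≤ ∑ j ∈ range (2 * M), |(Dk M (tau M j - φ)).re| * |(S0 M (tau M j)).re| :=
    Finset.sum_nonneg fun j _ => mul_nonneg (abs_nonneg _) (abs_nonneg _)
  have hL0 : 0 ≤ (2 * M : ℝ) * |s φ| := by positivity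
  calc ((2 * M : ℝ) * |s φ|) ^ 2
      ≤ (A * ∑ j ∈ range (2 * M), |(Dk M (tau M j - φ)).re| * |(S0 M (tau M j)).re|) ^ 2 := by
        apply sq_le_sq' _ h3
        nlinarith
  _ = A ^ 2 * (∑ j ∈ range (2 * M), |(Dk M (tau M j - φ)).re| * |(S0 M (tau M j)).re|) ^ 2 := by
        ring
  _ ≤ A ^ 2 * (((2 * M) * (2 * M - 1 : ℕ)) * ((2 * M) * M)) := by
        apply mul_le_mul_of_nonneg_left _ (sq_nonneg A)
        exact hCS.trans_eq rfl
  _ = A ^ 2 * ((2 * M) * (2 * M - 1 : ℕ)) * ((2 * M) * M) := by ring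

lemma sq_le_imp_abs_le {x B : ℝ} (hB : 0 ≤ B) (h : x ^ 2 ≤ B ^ 2) : |x| ≤ B := by
  have := Real.sqrt_le_sqrt h
  rwa [Real.sqrt_sq_eq_abs, Real.sqrt_sq hB] at this

end MK9

/-- The compact set `E = {(x,y) : y³ = (1-x²)y, x ∈ [-1,1]}`. -/
def E9 : Set (ℝ × ℝ) := {p | p.2 ^ 3 = (1 - p.1 ^ 2) * p.2 ∧ p.1 ∈ Set.Icc (-1 : ℝ) 1}

set_option maxHeartbeats 1000000 in
/-- For `P(x,y) = G₀(x) + G₁(x)y + G₂(x)y²`, one has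
`sup_E |∂P/∂y| ≤ 2 (deg P)² sup_E |P|`, where `∂P/∂y = G₁(x) + 2G₂(x)y`. -/
theorem markov_y_on_E9 (G₀ G₁ G₂ : Polynomial ℝ) (C : ℝ)
    (hC : ∀ p ∈ E9, |G₀.eval p.1 + G₁.eval p.1 * p.2 + G₂.eval p.1 * p.2 ^ 2| ≤ C) :
    ∀ p ∈ E9,
      |G₁.eval p.1 + 2 * G₂.eval p.1 * p.2|
        ≤ 2 * ((max (max G₀.natDegree (G₁.natDegree + 1)) (G₂.natDegree + 2) : ℕ) : ℝ) ^ 2 * C := by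
  intro p hp
  obtain ⟨hp1, hp2⟩ := hp
  rw [Set.mem_Icc] at hp2
  obtain ⟨hplo, hphi⟩ := hp2
  set d := max (max G₀.natDegree (G₁.natDegree + 1)) (G₂.natDegree + 2) with hddef
  have hd1 : G₁.natDegree + 1 ≤ d := le_trans (le_max_right _ _) (le_max_left _ _)
  have hdg2 : G₂.natDegree + 2 ≤ d := le_max_right _ _
  have hd2 : 2 ≤ d := by omega
  have hC0 : 0 ≤ C := by
    have h := hC (0, 0) (by constructor <;> norm_num)
    simpa using le_trans (abs_nonneg _) h
  have hcirc : ∀ θ : ℝ, (Real.cos θ, Real.sin θ) ∈ E9 := by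
    intro θ
    constructor
    · have h := Real.sin_sq_add_cos_sq θ
      show Real.sin θ ^ 3 = (1 - Real.cos θ ^ 2) * Real.sin θ
      linear_combination Real.sin θ * h
    · exact Set.mem_Icc.mpr ⟨Real.neg_one_le_cos θ, Real.cos_le_one θ⟩
  have htb : ∀ θ : ℝ, |G₀.eval (Real.cos θ) + G₁.eval (Real.cos θ) * Real.sin θ
      + G₂.eval (Real.cos θ) * Real.sin θ ^ 2| ≤ C := fun θ => hC _ (hcirc θ)
  have hg0 : ∀ θ : ℝ, |G₀.eval (Real.cos θ)| ≤ C := by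
    intro θ
    have h := hC (Real.cos θ, 0) ⟨by norm_num, (hcirc θ).2⟩
    simpa using h
  have hfa : ∀ θ : ℝ, |G₁.eval (Real.cos θ) * Real.sin θ| ≤ C := by
    intro θ
    have h1 := htb θ
    have h2 := htb (-θ)
    rw [Real.cos_neg, Real.sin_neg] at h2
    rw [abs_le] at h1 h2 ⊢
    constructor <;> nlinarith [h1.1, h1.2, h2.1, h2.2]
  have hfb : ∀ θ : ℝ, |(G₁.eval (Real.cos θ) + 2 * G₂.eval (Real.cos θ) * Real.sin θ)
      * Real.sin θ| ≤ 4 * C := by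
    intro θ
    have h1 := htb θ
    have h2 := htb (-θ)
    rw [Real.cos_neg, Real.sin_neg] at h2
    have h3 := hg0 θ
    rw [abs_le] at h1 h2 h3 ⊢
    constructor <;> nlinarith [h1.1, h1.2, h2.1, h2.2, h3.1, h3.2]
  have hcast1 : ((2 * d - 1 : ℕ) : ℝ) = 2 * (d : ℝ) - 1 := by
    rw [Nat.cast_sub (by omega : 1 ≤ 2 * d)]
    push_cast
    ring
  have hdr2 : (2 : ℝ) ≤ (d : ℝ) := by exact_mod_cast hd2
  have hB0 : 0 ≤ 2 * ((d : ℕ) : ℝ) ^ 2 * C := by positivity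
  by_cases hy : p.2 = 0
  · -- the segment case: bound |G₁(x)|
    rw [hy, mul_zero, add_zero]
    have hmem : (fun θ : ℝ => ((G₁.eval (Real.cos θ) : ℝ) : ℂ)) ∈ MK9.V (d - 1) :=
      MK9.evalcos_mem G₁ (by omega)
    have hkb := MK9.key_bound (M := d) (by omega) hmem
      (s := fun θ : ℝ => G₁.eval (Real.cos θ)) (fun θ => rfl) hfa (Real.arccos p.1)
    rw [hcast1, Real.cos_arccos hplo hphi] at hkb
    apply MK9.sq_le_imp_abs_le hB0
    have hsq : (2 * (d:ℝ) * |G₁.eval p.1|) ^ 2 = 4 * (d:ℝ)^2 * (G₁.eval p.1)^2 := by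
      rw [mul_pow, mul_pow, sq_abs]; ring
    rw [hsq] at hkb
    have hd2pos : (0:ℝ) < 4 * (d:ℝ)^2 := by positivity
    have hstep : (G₁.eval p.1)^2 ≤ (d:ℝ) * (2*(d:ℝ) - 1) * C^2 := by
      rw [← mul_le_mul_iff_right₀ hd2pos]
      calc 4*(d:ℝ)^2 * (G₁.eval p.1)^2 ≤ C ^ 2 * (2 * (d:ℝ) * (2 * (d:ℝ) - 1)) * (2 * (d:ℝ) * (d:ℝ)) := hkb
      _ = 4*(d:ℝ)^2 * ((d:ℝ) * (2*(d:ℝ) - 1) * C^2) := by ring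
    have h4 : (4:ℝ) ≤ (d:ℝ)^2 := by nlinarith [hdr2]
    have hfac : (d:ℝ) * (2*(d:ℝ) - 1) ≤ 4*(d:ℝ)^4 := by
      nlinarith [h4, sq_nonneg (d:ℝ), hdr2]
    calc (G₁.eval p.1)^2 ≤ (d:ℝ) * (2*(d:ℝ) - 1) * C^2 := hstep
    _ ≤ 4*(d:ℝ)^4 * C^2 := by nlinarith [hfac, sq_nonneg C]
    _ = (2 * (d:ℝ)^2 * C)^2 := by ring
  · -- the circle case
    have hy2 : p.2 ^ 2 = 1 - p.1 ^ 2 := by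
      have hfac : (p.2 ^ 2 - (1 - p.1 ^ 2)) * p.2 = 0 := by linear_combination hp1
      rcases mul_eq_zero.mp hfac with h | h
      · linarith [h]
      · exact absurd h hy
    set φ := if 0 ≤ p.2 then Real.arccos p.1 else -Real.arccos p.1 with hφdef
    have hcos : Real.cos φ = p.1 := by
      rw [hφdef]
      split_ifs
      · exact Real.cos_arccos hplo hphi
      · rw [Real.cos_neg]; exact Real.cos_arccos hplo hphi
    have hsin : Real.sin φ = p.2 := by
      have habs : Real.sqrt (1 - p.1 ^ 2) = |p.2| := by
        rw [← hy2, Real.sqrt_sq_eq_abs]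
      rw [hφdef]
      split_ifs with h
      · rw [Real.sin_arccos, habs, abs_of_nonneg h]
      · rw [Real.sin_neg, Real.sin_arccos, habs, abs_of_neg (lt_of_not_ge h)]
        ring
    have htarget : G₁.eval p.1 + 2 * G₂.eval p.1 * p.2
        = G₁.eval (Real.cos φ) + 2 * G₂.eval (Real.cos φ) * Real.sin φ := by
      rw [hcos, hsin]
    rw [htarget]
    by_cases hd3 : 3 ≤ d
    · -- main case via the trigonometric inequality
      have m1 : (fun θ : ℝ => ((G₁.eval (Real.cos θ) : ℝ) : ℂ)) ∈ MK9.V (d - 1) :=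
        MK9.evalcos_mem G₁ (by omega)
      have m2 : (fun θ : ℝ => ((G₂.eval (Real.cos θ) : ℝ) : ℂ) * ((Real.sin θ : ℝ) : ℂ))
          ∈ MK9.V (G₂.natDegree + 1) := MK9.mul_sin_mem (MK9.evalcos_mem G₂ le_rfl)
      have m2' : (fun θ : ℝ => ((G₂.eval (Real.cos θ) : ℝ) : ℂ) * ((Real.sin θ : ℝ) : ℂ))
          ∈ MK9.V (d - 1) := MK9.V_mono (by omega) m2
      have hmem : (fun θ : ℝ => ((G₁.eval (Real.cos θ)
          + 2 * G₂.eval (Real.cos θ) * Real.sin θ : ℝ) : ℂ)) ∈ MK9.V (d - 1) := by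
        have heq : (fun θ : ℝ => ((G₁.eval (Real.cos θ)
            + 2 * G₂.eval (Real.cos θ) * Real.sin θ : ℝ) : ℂ))
            = (fun θ : ℝ => ((G₁.eval (Real.cos θ) : ℝ) : ℂ))
              + (2 : ℂ) • (fun θ : ℝ => ((G₂.eval (Real.cos θ) : ℝ) : ℂ)
                * ((Real.sin θ : ℝ) : ℂ)) := by
          funext θ
          simp only [Pi.add_apply, Pi.smul_apply, smul_eq_mul]
          push_cast
          ring
        rw [heq]
        exact Submodule.add_mem _ m1 (Submodule.smul_mem _ _ m2')
      have hkb := MK9.key_bound (M := d) (by omega) hmem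
        (s := fun θ : ℝ => G₁.eval (Real.cos θ) + 2 * G₂.eval (Real.cos θ) * Real.sin θ)
        (fun θ => rfl) hfb φ
      rw [hcast1] at hkb
      apply MK9.sq_le_imp_abs_le hB0
      set w := G₁.eval (Real.cos φ) + 2 * G₂.eval (Real.cos φ) * Real.sin φ with hw
      have hsq : (2 * (d:ℝ) * |w|) ^ 2 = 4 * (d:ℝ)^2 * w^2 := by
        rw [mul_pow, mul_pow, sq_abs]; ring
      rw [hsq] at hkb
      have hdr3 : (3 : ℝ) ≤ (d : ℝ) := by exact_mod_cast hd3
      have hd2pos : (0:ℝ) < 4 * (d:ℝ)^2 := by positivity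
      have hstep : w^2 ≤ 16 * (d:ℝ) * (2*(d:ℝ) - 1) * C^2 := by
        rw [← mul_le_mul_iff_right₀ hd2pos]
        calc 4*(d:ℝ)^2 * w^2 ≤ (4*C) ^ 2 * (2 * (d:ℝ) * (2 * (d:ℝ) - 1)) * (2 * (d:ℝ) * (d:ℝ)) := hkb
        _ = 4*(d:ℝ)^2 * (16 * (d:ℝ) * (2*(d:ℝ) - 1) * C^2) := by ring
      have h9 : (9:ℝ) ≤ (d:ℝ)^2 := by nlinarith [hdr3]
      have hfac : 16 * (d:ℝ) * (2*(d:ℝ) - 1) ≤ 4*(d:ℝ)^4 := by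
        nlinarith [h9, sq_nonneg (d:ℝ), hdr3]
      calc w^2 ≤ 16 * (d:ℝ) * (2*(d:ℝ) - 1) * C^2 := hstep
      _ ≤ 4*(d:ℝ)^4 * C^2 := by nlinarith [hfac, sq_nonneg C]
      _ = (2 * (d:ℝ)^2 * C)^2 := by ring
    · -- the degenerate case d = 2 by direct estimates
      have hd : d = 2 := by omega
      have hn2 : G₂.natDegree = 0 := by omega
      have hn1 : G₁.natDegree ≤ 1 := by omega
      set a := G₁.coeff 0 with hadef
      set b := G₁.coeff 1 with hbdef
      set c := G₂.coeff 0 with hcdef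
      have hG1 : G₁ = Polynomial.C b * Polynomial.X + Polynomial.C a :=
        Polynomial.eq_X_add_C_of_natDegree_le_one hn1
      have hG2 : G₂ = Polynomial.C c := Polynomial.eq_C_of_natDegree_eq_zero hn2
      have heval1 : ∀ x : ℝ, G₁.eval x = b * x + a := by
        intro x; rw [hG1]; simp
      have heval2 : ∀ x : ℝ, G₂.eval x = c := by
        intro x; rw [hG2]; simp
      -- memberships of special points
      have hm01 : ((0:ℝ), (1:ℝ)) ∈ E9 := by constructor <;> norm_num
      have hm0m1 : ((0:ℝ), (-1:ℝ)) ∈ E9 := by constructor <;> norm_num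
      have hm00 : ((0:ℝ), (0:ℝ)) ∈ E9 := by constructor <;> norm_num
      set u : ℝ := Real.sqrt 2 / 2 with hudef
      have hu2 : u ^ 2 = 1 / 2 := by
        rw [hudef, div_pow, Real.sq_sqrt (by norm_num : (2:ℝ) ≥ 0)]
        norm_num
      have hu0 : 0 ≤ u := by positivity
      have hu1 : u ≤ 1 := by nlinarith [hu2, hu0]
      have hmemu : ∀ y : ℝ, y = u ∨ y = -u → ∀ x : ℝ, x = u ∨ x = -u → (x, y) ∈ E9 := by
        intro y hy' x hx'
        constructor
        · show y ^ 3 = (1 - x ^ 2) * y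
          have hx2 : x ^ 2 = 1 / 2 := by rcases hx' with h | h <;> rw [h] <;> simpa using hu2
          have hy2' : y ^ 2 = 1 / 2 := by rcases hy' with h | h <;> rw [h] <;> simpa using hu2
          have : y ^ 3 = y * y ^ 2 := by ring
          rw [this, hx2, hy2']
          ring
        · show x ∈ Set.Icc (-1:ℝ) 1
          rcases hx' with h | h <;> rw [h] <;> constructor <;> nlinarith [hu0, hu1]
      have h01 := hC _ hm01
      have h0m1 := hC _ hm0m1
      have h00 := hC _ hm00
      have hpp := hC _ (hmemu u (Or.inl rfl) u (Or.inl rfl))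
      have hpm := hC _ (hmemu (-u) (Or.inr rfl) u (Or.inl rfl))
      have hmp := hC _ (hmemu u (Or.inl rfl) (-u) (Or.inr rfl))
      have hmm2 := hC _ (hmemu (-u) (Or.inr rfl) (-u) (Or.inr rfl))
      simp only [heval1, heval2] at h01 h0m1 h00 hpp hpm hmp hmm2
      norm_num at h01 h0m1 h00
      -- |a| ≤ C, |a0 + c| style bounds
      have ha : |a| ≤ C := by
        rw [abs_le] at h01 h0m1 ⊢
        constructor <;> linarith [h01.1, h01.2, h0m1.1, h0m1.2]
      have hcc : |c| ≤ 2 * C := by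
        rw [abs_le] at h01 h0m1 h00 ⊢
        constructor <;> linarith [h01.1, h01.2, h0m1.1, h0m1.2, h00.1, h00.2]
      have hkey : ∀ s : ℝ, s = u ∨ s = -u → (b * s + a) * s = b / 2 + a * s := by
        intro s hs
        have hs2 : s ^ 2 = 1 / 2 := by rcases hs with h | h <;> rw [h] <;> simpa using hu2
        linear_combination b * hs2
      rw [show ((G₀.eval u + (b * u + a) * u + c * u ^ 2)
          = G₀.eval u + (b / 2 + a * u) + c * u ^ 2) by
        linear_combination hkey u (Or.inl rfl)] at hpp
      rw [show ((G₀.eval u + (b * u + a) * -u + c * (-u) ^ 2)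
          = G₀.eval u - (b / 2 + a * u) + c * u ^ 2) by
        linear_combination (-1 : ℝ) * hkey u (Or.inl rfl)] at hpm
      rw [show ((G₀.eval (-u) + (b * -u + a) * u + c * u ^ 2)
          = G₀.eval (-u) + (-(b / 2) + a * u) + c * u ^ 2) by
        linear_combination (-1 : ℝ) * hkey (-u) (Or.inr rfl)] at hmp
      rw [show ((G₀.eval (-u) + (b * -u + a) * -u + c * (-u) ^ 2)
          = G₀.eval (-u) - (-(b / 2) + a * u) + c * u ^ 2) by
        linear_combination hkey (-u) (Or.inr rfl)] at hmm2
      have hb : |b| ≤ 2 * C := by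
        rw [abs_le] at hpp hpm hmp hmm2 ⊢
        constructor <;> linarith [hpp.1, hpp.2, hpm.1, hpm.2, hmp.1, hmp.2, hmm2.1, hmm2.2]
      -- final elementary estimate
      have hx1 : |Real.cos φ| ≤ 1 := Real.abs_cos_le_one φ
      have hy1 : |Real.sin φ| ≤ 1 := Real.abs_sin_le_one φ
      rw [heval1, heval2, hd]
      have htri : |b * Real.cos φ + a + 2 * c * Real.sin φ|
          ≤ |b| * |Real.cos φ| + |a| + 2 * |c| * |Real.sin φ| := by
        calc |b * Real.cos φ + a + 2 * c * Real.sin φ|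
            ≤ |b * Real.cos φ + a| + |2 * c * Real.sin φ| := abs_add_le _ _
        _ ≤ |b * Real.cos φ| + |a| + |2 * c * Real.sin φ| := by
              linarith [abs_add_le (b * Real.cos φ) a]
        _ = |b| * |Real.cos φ| + |a| + 2 * |c| * |Real.sin φ| := by
              rw [abs_mul, abs_mul, abs_mul]
              norm_num
      have h1 : |b| * |Real.cos φ| ≤ |b| := mul_le_of_le_one_right (abs_nonneg _) hx1
      have h2 : 2 * |c| * |Real.sin φ| ≤ 2 * |c| :=
        mul_le_of_le_one_right (by positivity) hy1
      calc |b * Real.cos φ + a + 2 * c * Real.sin φ|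
          ≤ |b| * |Real.cos φ| + |a| + 2 * |c| * |Real.sin φ| := htri
      _ ≤ |b| + |a| + 2 * |c| := by linarith
      _ ≤ 2 * C + C + 2 * (2 * C) := by linarith
      _ ≤ 2 * ((2:ℕ):ℝ) ^ 2 * C := by push_cast; linarith [hC0]
end
end

section
/- Let E ⊂ ℝ^N be compact and contained in V, and suppose E is a 𝒫(y)⊗𝒫_{d-1}(x_k)-Markov set with constants M, m. Then there is a constant C > 0 depending only on E and d such that for every polynomial P = ∑_{i=0}^{d-1} G_i(y) x_k^i, ‖G_i‖_{π(E)} ≤ (C/i!) (deg P)^{m(d-1)} ‖P‖_E for each i = 0,…,d-1, where π(E) is the projection of E onto the y = (x_1,…,x_{k-1},x_{k+1},…,x_N) coordinates. -/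
/-- Partial derivative in direction `i` of a function on `ℝ^N`. -/
noncomputable def pd {N : ℕ} (i : Fin N) (f : (Fin N → ℝ) → ℝ) : (Fin N → ℝ) → ℝ :=
  fun x => fderiv ℝ f x (Pi.single i 1)

/-- Iterated partial derivative `D^α` for a multi-index `α`. -/
noncomputable def mderiv {N : ℕ} (α : Fin N → ℕ) (f : (Fin N → ℝ) → ℝ) : (Fin N → ℝ) → ℝ :=
  (List.finRange N).foldr (fun i g => (pd i)^[α i] g) f

/-- The polynomial function `P(z) = ∑_{i=0}^{d-1} G_i(y) x_k^i`, where `y` denotes the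
coordinates of `z` other than the `k`-th one. -/
noncomputable def Pfun {n d : ℕ} (k : Fin (n + 1)) (G : Fin d → MvPolynomial (Fin n) ℝ) :
    (Fin (n + 1) → ℝ) → ℝ :=
  fun z => ∑ i : Fin d, MvPolynomial.eval (fun j => z (k.succAbove j)) (G i) * z k ^ (i : ℕ)

/-- `deg P = max_i (deg G_i + i)`. -/
def degP {n d : ℕ} (G : Fin d → MvPolynomial (Fin n) ℝ) : ℕ :=
  Finset.univ.sup fun i : Fin d => (G i).totalDegree + (i : ℕ)

/-- The projection of `E` forgetting the `k`-th coordinate. -/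
def projE {n : ℕ} (k : Fin (n + 1)) (E : Set (Fin (n + 1) → ℝ)) : Set (Fin n → ℝ) :=
  (fun z (j : Fin n) => z (k.succAbove j)) '' E

open MvPolynomial


noncomputable def Gopt {n d : ℕ} (G : Fin d → MvPolynomial (Fin n) ℝ) (t : ℕ) :
    MvPolynomial (Fin n) ℝ :=
  if h : t < d then G ⟨t, h⟩ else 0

noncomputable def DG {n d : ℕ} (G : Fin d → MvPolynomial (Fin n) ℝ) :
    Fin d → MvPolynomial (Fin n) ℝ :=
  fun i => ((i : ℕ) + 1) • Gopt G ((i : ℕ) + 1)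

lemma Gopt_DG {n d : ℕ} (G : Fin d → MvPolynomial (Fin n) ℝ) (t : ℕ) :
    Gopt (DG G) t = (t + 1) • Gopt G (t + 1) := by
  by_cases h : t < d
  · rw [Gopt, dif_pos h]; rfl
  · rw [Gopt, dif_neg h, Gopt, dif_neg (by omega), smul_zero]

lemma DG_iterate {n d : ℕ} (r : ℕ) (G : Fin d → MvPolynomial (Fin n) ℝ) (j : Fin d) :
    (DG^[r] G) j = (((j : ℕ) + r).descFactorial r) • Gopt G ((j : ℕ) + r) := by
  induction r generalizing G with
  | zero => simp [Gopt]
  | succ r ih =>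
      rw [Function.iterate_succ_apply, ih (DG G), Gopt_DG, smul_smul]
      rw [show (j : ℕ) + (r + 1) = ((j : ℕ) + r) + 1 by omega,
        Nat.succ_descFactorial_succ, Nat.mul_comm]

lemma foldr_of_not_mem {N : ℕ} (k : Fin N) (r : ℕ) (f : (Fin N → ℝ) → ℝ)
    (l : List (Fin N)) (hl : k ∉ l) :
    l.foldr (fun i g => (pd i)^[if i = k then r else 0] g) f = f := by
  induction l with
  | nil => rfl
  | cons a l ih =>
      have ha : a ≠ k := fun h => hl (h ▸ (List.mem_cons_self : a ∈ a :: l))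
      simp only [List.foldr_cons, if_neg ha, Function.iterate_zero, id]
      exact ih (fun h => hl (List.mem_cons_of_mem a h))

lemma foldr_of_mem {N : ℕ} (k : Fin N) (r : ℕ) (f : (Fin N → ℝ) → ℝ)
    (l : List (Fin N)) (hn : l.Nodup) (hm : k ∈ l) :
    l.foldr (fun i g => (pd i)^[if i = k then r else 0] g) f = (pd k)^[r] f := by
  induction l with
  | nil => simp at hm
  | cons a l ih =>
      rcases List.mem_cons.mp hm with h | h
      · subst h
        have : k ∉ l := (List.nodup_cons.mp hn).1
        simp only [List.foldr_cons, if_pos rfl, if_true]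
        rw [foldr_of_not_mem k r f l this]
      · have ha : a ≠ k := by
          rintro rfl; exact (List.nodup_cons.mp hn).1 h
        simp only [List.foldr_cons, if_neg ha, Function.iterate_zero, id]
        exact ih (List.nodup_cons.mp hn).2 h

lemma mderiv_single {N : ℕ} (k : Fin N) (r : ℕ) (f : (Fin N → ℝ) → ℝ) :
    mderiv (fun j => if j = k then r else 0) f = (pd k)^[r] f :=
  foldr_of_mem k r f _ (List.nodup_finRange N) (List.mem_finRange k)

lemma diff_eval {n : ℕ} (p : MvPolynomial (Fin n) ℝ) :
    Differentiable ℝ (fun y : Fin n → ℝ => eval y p) := by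
  induction p using MvPolynomial.induction_on with
  | C a => simpa using differentiable_const (a : ℝ)
  | add p q hp hq => simpa using hp.fun_add hq
  | mul_X p j hp =>
      simpa using hp.fun_mul ((ContinuousLinearMap.proj j : (Fin n → ℝ) →L[ℝ] ℝ).differentiable)

lemma sum_shift (d : ℕ) (a : ℕ → ℝ) (x : ℝ) (ha : a d = 0) :
    ∑ i : Fin d, a i * (((i : ℕ) : ℝ) * x ^ ((i : ℕ) - 1)) =
    ∑ i : Fin d, (((i : ℕ) : ℝ) + 1) * a ((i : ℕ) + 1) * x ^ (i : ℕ) := by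
  rw [Fin.sum_univ_eq_sum_range (fun t => a t * ((t : ℝ) * x ^ (t - 1))) d,
    Fin.sum_univ_eq_sum_range (fun t => ((t : ℝ) + 1) * a (t + 1) * x ^ t) d]
  have h1 : ∑ t ∈ Finset.range d, a t * ((t : ℝ) * x ^ (t - 1))
      = ∑ t ∈ Finset.range (d + 1), a t * ((t : ℝ) * x ^ (t - 1)) := by
    rw [Finset.sum_range_succ, ha]
    ring
  rw [h1, Finset.sum_range_succ' (fun t => a t * ((t : ℝ) * x ^ (t - 1))) d]
  simp only [Nat.cast_zero, zero_mul, mul_zero, add_zero, Nat.cast_add, Nat.cast_one,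
    Nat.add_sub_cancel]
  refine Finset.sum_congr rfl (fun t _ => ?_)
  ring

lemma pd_Pfun_aux {n d : ℕ} (k : Fin (n+1)) (G : Fin d → MvPolynomial (Fin n) ℝ)
    (z : Fin (n+1) → ℝ) :
    pd k (Pfun k G) z
      = ∑ i : Fin d, eval (fun j => z (k.succAbove j)) (G i)
          * (((i : ℕ) : ℝ) * z k ^ ((i : ℕ) - 1)) := by
  set π : ((Fin (n+1)) → ℝ) →L[ℝ] (Fin n → ℝ) :=
    ContinuousLinearMap.pi (fun j : Fin n => ContinuousLinearMap.proj (k.succAbove j)) with hπ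
  have hπz : ∀ w : Fin (n+1) → ℝ, π w = fun j => w (k.succAbove j) := fun w => rfl
  have hπ1 : π (Pi.single k 1) = 0 := by
    funext j
    have : (k.succAbove j) ≠ k := Fin.succAbove_ne k j
    simp [hπ, Pi.single_eq_of_ne this]
  have hder : ∀ i : Fin d, HasFDerivAt
      (fun w : Fin (n+1) → ℝ => eval (π w) (G i) * w k ^ (i : ℕ))
      ((eval (π z) (G i)) • ((((i : ℕ) : ℝ) * z k ^ ((i : ℕ) - 1)) •
          (ContinuousLinearMap.proj k : ((Fin (n+1)) → ℝ) →L[ℝ] ℝ)) +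
        (z k ^ (i : ℕ)) • ((fderiv ℝ (fun y => eval y (G i)) (π z)).comp π)) z := by
    intro i
    have h1 : HasFDerivAt (fun w : Fin (n+1) → ℝ => eval (π w) (G i))
        ((fderiv ℝ (fun y => eval y (G i)) (π z)).comp π) z :=
      ((diff_eval (G i)) (π z)).hasFDerivAt.comp z π.hasFDerivAt
    have h2 : HasFDerivAt (fun w : Fin (n+1) → ℝ => w k ^ (i : ℕ))
        ((((i : ℕ) : ℝ) * z k ^ ((i : ℕ) - 1)) •
          (ContinuousLinearMap.proj k : ((Fin (n+1)) → ℝ) →L[ℝ] ℝ)) z :=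
      (hasDerivAt_pow (i : ℕ) (z k)).comp_hasFDerivAt z
        (ContinuousLinearMap.proj k : ((Fin (n+1)) → ℝ) →L[ℝ] ℝ).hasFDerivAt
    exact h1.mul h2
  have hsum : HasFDerivAt (Pfun k G)
      (∑ i : Fin d, ((eval (π z) (G i)) • ((((i : ℕ) : ℝ) * z k ^ ((i : ℕ) - 1)) •
          (ContinuousLinearMap.proj k : ((Fin (n+1)) → ℝ) →L[ℝ] ℝ)) +
        (z k ^ (i : ℕ)) • ((fderiv ℝ (fun y => eval y (G i)) (π z)).comp π))) z := by
    have : Pfun k G = fun w => ∑ i : Fin d, eval (π w) (G i) * w k ^ (i : ℕ) := by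
      funext w; simp only [Pfun]; rw [hπz w]
    rw [this]
    exact HasFDerivAt.fun_sum (fun i _ => hder i)
  rw [pd, hsum.fderiv]
  rw [ContinuousLinearMap.sum_apply]
  refine Finset.sum_congr rfl (fun i _ => ?_)
  rw [ContinuousLinearMap.add_apply, ContinuousLinearMap.smul_apply,
    ContinuousLinearMap.smul_apply, ContinuousLinearMap.smul_apply,
    ContinuousLinearMap.comp_apply, hπ1, map_zero, ContinuousLinearMap.proj_apply,
    Pi.single_eq_same]
  simp [hπz]

lemma pd_Pfun {n d : ℕ} (k : Fin (n+1)) (G : Fin d → MvPolynomial (Fin n) ℝ) :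
    pd k (Pfun k G) = Pfun k (DG G) := by
  funext z
  rw [pd_Pfun_aux k G z]
  set y : Fin n → ℝ := fun j => z (k.succAbove j) with hy
  set a : ℕ → ℝ := fun t => eval y (Gopt G t) with haf
  have ha : a d = 0 := by simp [haf, Gopt]
  have hGa : ∀ i : Fin d, eval y (G i) = a (i : ℕ) := by
    intro i
    simp [haf, Gopt, i.isLt]
  have hDGa : ∀ i : Fin d, eval y (DG G i) = (((i : ℕ) : ℝ) + 1) * a ((i : ℕ) + 1) := by
    intro i
    rw [DG, map_nsmul, nsmul_eq_mul]
    push_cast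
    rfl
  calc ∑ i : Fin d, eval y (G i) * (((i : ℕ) : ℝ) * z k ^ ((i : ℕ) - 1))
      = ∑ i : Fin d, a (i : ℕ) * (((i : ℕ) : ℝ) * z k ^ ((i : ℕ) - 1)) :=
        Finset.sum_congr rfl (fun i _ => by rw [hGa i])
    _ = ∑ i : Fin d, (((i : ℕ) : ℝ) + 1) * a ((i : ℕ) + 1) * z k ^ (i : ℕ) :=
        sum_shift d a (z k) ha
    _ = Pfun k (DG G) z := by
        rw [Pfun]
        exact Finset.sum_congr rfl (fun i _ => by rw [← hy, hDGa i])

lemma pd_iter_Pfun {n d : ℕ} (k : Fin (n+1)) (r : ℕ) (G : Fin d → MvPolynomial (Fin n) ℝ) :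
    (pd k)^[r] (Pfun k G) = Pfun k (DG^[r] G) := by
  induction r generalizing G with
  | zero => rfl
  | succ r ih =>
      rw [Function.iterate_succ_apply, pd_Pfun k G, ih (DG G),
        ← Function.iterate_succ_apply]

/-- If a compact `E ⊂ ℝ^N` is a `𝒫(y)⊗𝒫_{d-1}(x_k)`-Markov set with constants `M, m`, then
there is `C > 0` (depending only on `E` and `d`) such that for every
`P = ∑_{i<d} G_i(y) x_k^i`, `‖G_i‖_{π(E)} ≤ (C/i!) (deg P)^{m(d-1)} ‖P‖_E` for each `i`. -/
theorem coefficient_bounds_of_Markov (n d : ℕ) (hd : 1 ≤ d) (k : Fin (n + 1))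
    (E : Set (Fin (n + 1) → ℝ)) (hE : IsCompact E) (hEne : E.Nonempty)
    (M m : ℝ) (hM : 0 < M) (hm : 0 < m)
    (hMarkov : ∀ G : Fin d → MvPolynomial (Fin n) ℝ, ∀ α : Fin (n + 1) → ℕ, ∀ C : ℝ,
      (∀ z ∈ E, |Pfun k G z| ≤ C) →
      ∀ z ∈ E, |mderiv α (Pfun k G) z|
        ≤ M ^ (∑ i, α i) * ((degP G : ℝ)) ^ (m * ((∑ i, α i : ℕ) : ℝ)) * C) :
    ∃ C : ℝ, 0 < C ∧
      ∀ G : Fin d → MvPolynomial (Fin n) ℝ, ∀ D : ℝ,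
        (∀ z ∈ E, |Pfun k G z| ≤ D) →
        ∀ i : Fin d, ∀ y ∈ projE k E,
          |MvPolynomial.eval y (G i)|
            ≤ C / ((i : ℕ).factorial : ℝ) * ((degP G : ℝ)) ^ (m * ((d : ℝ) - 1)) * D := by
  obtain ⟨e, rfl⟩ : ∃ e, d = e + 1 := ⟨d - 1, by omega⟩
  -- bound on the k-th coordinate over E
  obtain ⟨R, hR⟩ : ∃ R, ∀ z ∈ E, |z k| ≤ R := by
    obtain ⟨R, hR⟩ := hE.exists_bound_of_continuousOn (continuous_apply k).continuousOn
    exact ⟨R, fun z hz => by simpa using hR z hz⟩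
  set R' : ℝ := max R 1 with hR'
  set M' : ℝ := max M 1 with hM'
  have hR'1 : (1 : ℝ) ≤ R' := le_max_right R 1
  have hM'1 : (1 : ℝ) ≤ M' := le_max_right M 1
  set A : ℝ := M' ^ (e + 1) with hA
  set B : ℝ := ((e : ℝ) + 1) * R' ^ (e + 1) with hB
  have hop : ∀ (x : ℝ) (r : ℕ), 1 ≤ x → 1 ≤ x ^ r := by
    intro x r hx
    calc (1 : ℝ) = 1 ^ r := by norm_num
      _ ≤ x ^ r := pow_le_pow_left₀ (by norm_num) hx r
  have hA1 : (1 : ℝ) ≤ A := hop M' _ hM'1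
  have hB1 : (1 : ℝ) ≤ B := by
    have h1 : (1 : ℝ) ≤ R' ^ (e + 1) := hop R' _ hR'1
    have h2 : (1 : ℝ) ≤ (e : ℝ) + 1 := by
      have := Nat.cast_nonneg (α := ℝ) e
      linarith
    calc (1:ℝ) = 1 * 1 := by ring
      _ ≤ ((e : ℝ) + 1) * R' ^ (e + 1) := by
          exact mul_le_mul h2 h1 (by norm_num) (by positivity)
  set c : ℕ → ℝ := fun t => Nat.rec A (fun _ ih => A + B * ih) t with hc
  have hc0 : c 0 = A := rfl
  have hcs : ∀ t, c (t + 1) = A + B * c t := fun t => rfl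
  have hcA : ∀ t, A ≤ c t := by
    intro t
    induction t with
    | zero => exact le_of_eq hc0.symm
    | succ t ih =>
        rw [hcs t]
        nlinarith
  have hcpos : ∀ t, 0 < c t := fun t => lt_of_lt_of_le (by linarith) (hcA t)
  have hcmono : Monotone c := by
    apply monotone_nat_of_le_succ
    intro t
    rw [hcs t]
    nlinarith [hcA t, hcpos t]
  refine ⟨c e, hcpos e, ?_⟩
  intro G D hD
  set T : ℝ := ((degP G : ℝ)) ^ (m * (((e + 1 : ℕ) : ℝ) - 1)) with hT
  have hT0 : 0 ≤ T := Real.rpow_nonneg (Nat.cast_nonneg _) _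
  have hD0 : 0 ≤ D := by
    obtain ⟨z₀, hz₀⟩ := hEne
    exact le_trans (abs_nonneg _) (hD z₀ hz₀)
  -- the Markov factor bound
  have hMT : ∀ i : Fin (e + 1),
      M ^ (i : ℕ) * ((degP G : ℝ)) ^ (m * (((i : ℕ) : ℕ) : ℝ)) ≤ A * T := by
    intro i
    have h1 : M ^ (i : ℕ) ≤ A := by
      calc M ^ (i : ℕ) ≤ M' ^ (i : ℕ) := by
            exact pow_le_pow_left₀ hM.le (le_max_left M 1) _
        _ ≤ M' ^ (e + 1) := pow_le_pow_right₀ hM'1 (by omega)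
    have h2 : ((degP G : ℝ)) ^ (m * (((i : ℕ) : ℕ) : ℝ)) ≤ T := by
      by_cases hdg : 1 ≤ degP G
      · apply Real.rpow_le_rpow_of_exponent_le (by exact_mod_cast hdg)
        have hie : ((i : ℕ) : ℝ) ≤ ((e + 1 : ℕ) : ℝ) - 1 := by
          have := i.isLt
          push_cast
          have : ((i : ℕ) : ℝ) ≤ (e : ℝ) := by exact_mod_cast Nat.lt_succ_iff.mp i.isLt
          linarith
        exact mul_le_mul_of_nonneg_left hie hm.le
      · have hdg0 : degP G = 0 := by omega
        have he0 : e = 0 := by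
          by_contra he
          have h1e : 1 ≤ e := by omega
          have hmem : (⟨1, by omega⟩ : Fin (e + 1)) ∈ Finset.univ := Finset.mem_univ _
          have := Finset.le_sup (f := fun i : Fin (e + 1) => (G i).totalDegree + (i : ℕ)) hmem
          rw [← degP] at this
          simp at this
          omega
        have hi0 : (i : ℕ) = 0 := by have := i.isLt; omega
        rw [hdg0, hi0, hT, hdg0, he0]
        norm_num
    exact mul_le_mul h1 h2 (Real.rpow_nonneg (Nat.cast_nonneg _) _) (by linarith)
  -- the key inductive claim
  have key : ∀ t : ℕ, ∀ i : Fin (e + 1), (i : ℕ) + t = e → ∀ z ∈ E,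
      |eval (fun j => z (k.succAbove j)) (G i)|
        ≤ c t / ((i : ℕ).factorial : ℝ) * T * D := by
    intro t
    induction t using Nat.strong_induction_on with
    | _ t IH =>
      intro i hit z hz
      set y : Fin n → ℝ := fun j => z (k.succAbove j) with hy
      set α : Fin (n + 1) → ℕ := fun j => if j = k then (i : ℕ) else 0 with hαdef
      have hα : ∑ j, α j = (i : ℕ) := by simp [hαdef]
      have hmd : mderiv α (Pfun k G) = Pfun k (DG^[(i : ℕ)] G) :=
        (mderiv_single k (i : ℕ) (Pfun k G)).trans (pd_iter_Pfun k (i : ℕ) G)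
      have hMk := hMarkov G α D hD z hz
      rw [hα, hmd] at hMk
      -- expand the sum
      have h0 : eval y ((DG^[(i : ℕ)] G) 0) = (((i : ℕ).factorial : ℕ) : ℝ) * eval y (G i) := by
        rw [DG_iterate, map_nsmul, nsmul_eq_mul]
        have hlt : ((0 : Fin (e + 1)) : ℕ) + (i : ℕ) < e + 1 := by
          simp [i.isLt]
        rw [Gopt, dif_pos hlt]
        norm_num [Nat.descFactorial_self]
      have hexp : Pfun k (DG^[(i : ℕ)] G) z
          = (((i : ℕ).factorial : ℕ) : ℝ) * eval y (G i)
            + ∑ j : Fin e, eval y ((DG^[(i : ℕ)] G) j.succ) * z k ^ ((j.succ : ℕ)) := by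
        rw [Pfun, Fin.sum_univ_succ, ← hy, h0]
        norm_num
      have heq : (((i : ℕ).factorial : ℕ) : ℝ) * eval y (G i)
          = Pfun k (DG^[(i : ℕ)] G) z
            - ∑ j : Fin e, eval y ((DG^[(i : ℕ)] G) j.succ) * z k ^ ((j.succ : ℕ)) := by
        rw [hexp]; ring
      have habs : (((i : ℕ).factorial : ℕ) : ℝ) * |eval y (G i)|
          ≤ M ^ (i : ℕ) * ((degP G : ℝ)) ^ (m * (((i : ℕ) : ℕ) : ℝ)) * D
            + ∑ j : Fin e, |eval y ((DG^[(i : ℕ)] G) j.succ) * z k ^ ((j.succ : ℕ))| := by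
        have h1 : |(((i : ℕ).factorial : ℕ) : ℝ) * eval y (G i)|
            = (((i : ℕ).factorial : ℕ) : ℝ) * |eval y (G i)| := by
          rw [abs_mul, Nat.abs_cast]
        rw [← h1, heq, sub_eq_add_neg]
        refine (abs_add_le _ _).trans ?_
        rw [abs_neg]
        exact add_le_add hMk (Finset.abs_sum_le_sum_abs _ _)
      -- bound the tail terms
      rcases t with _ | t'
      · -- t = 0 : all tail terms vanish
        have hterm0 : ∀ j : Fin e, eval y ((DG^[(i : ℕ)] G) j.succ) = 0 := by
          intro j
          rw [DG_iterate]
          have hge : ¬ ((j.succ : ℕ) + (i : ℕ) < e + 1) := by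
            have : (j.succ : ℕ) = (j : ℕ) + 1 := rfl
            omega
          rw [Gopt, dif_neg hge]
          simp
        have hsum0 : ∑ j : Fin e, |eval y ((DG^[(i : ℕ)] G) j.succ) * z k ^ ((j.succ : ℕ))| = 0 := by
          apply Finset.sum_eq_zero
          intro j _
          rw [hterm0 j]
          simp
        have hfin : (((i : ℕ).factorial : ℕ) : ℝ) * |eval y (G i)| ≤ c 0 * T * D := by
          rw [hc0]
          calc (((i : ℕ).factorial : ℕ) : ℝ) * |eval y (G i)|
              ≤ M ^ (i : ℕ) * ((degP G : ℝ)) ^ (m * (((i : ℕ) : ℕ) : ℝ)) * D + 0 := by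
                rw [← hsum0]; exact habs
            _ ≤ A * T * D := by
                rw [add_zero]
                exact mul_le_mul_of_nonneg_right (hMT i) hD0
        have hfp : (0 : ℝ) < (((i : ℕ).factorial : ℕ) : ℝ) := by
          exact_mod_cast Nat.factorial_pos _
        rw [div_mul_eq_mul_div, div_mul_eq_mul_div, le_div_iff₀ hfp]
        calc |eval y (G i)| * (((i : ℕ).factorial : ℕ) : ℝ)
            = (((i : ℕ).factorial : ℕ) : ℝ) * |eval y (G i)| := by ring
          _ ≤ c 0 * T * D := hfin
      · -- t = t' + 1
        have hterm : ∀ j : Fin e, |eval y ((DG^[(i : ℕ)] G) j.succ) * z k ^ ((j.succ : ℕ))|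
            ≤ c t' * R' ^ (e + 1) * T * D := by
          intro j
          have hRHS0 : 0 ≤ c t' * R' ^ (e + 1) * T * D := by
            have := hcpos t'
            have h1 : (0:ℝ) ≤ R' ^ (e+1) := by positivity
            have : 0 ≤ c t' * R' ^ (e + 1) := by positivity
            have : 0 ≤ c t' * R' ^ (e + 1) * T := mul_nonneg this hT0
            exact mul_nonneg this hD0
          rw [DG_iterate]
          set w : ℕ := ((j.succ : Fin (e + 1)) : ℕ) + (i : ℕ) with hw
          have hjsucc : ((j.succ : Fin (e + 1)) : ℕ) = (j : ℕ) + 1 := rfl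
          by_cases hwd : w < e + 1
          · set i' : Fin (e + 1) := ⟨w, hwd⟩ with hi'
            have hGopt : Gopt G w = G i' := by rw [Gopt, dif_pos hwd]
            have hjt : (j : ℕ) < t' + 1 := by omega
            have hlt2 : t' - (j : ℕ) < t' + 1 := by omega
            have hsum2 : (i' : ℕ) + (t' - (j : ℕ)) = e := by
              simp only [hi']
              omega
            have hIH := IH (t' - (j : ℕ)) hlt2 i' hsum2 z hz
            rw [← hy] at hIH
            have hdf : ((w.descFactorial (i : ℕ) : ℕ) : ℝ) ≤ ((w.factorial : ℕ) : ℝ) := by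
              have hiw : (i : ℕ) ≤ w := by omega
              have := Nat.factorial_mul_descFactorial hiw
              have h2 : w.descFactorial (i : ℕ) ≤ w.factorial := by
                calc w.descFactorial (i : ℕ)
                    ≤ (w - (i : ℕ)).factorial * w.descFactorial (i : ℕ) :=
                      Nat.le_mul_of_pos_left _ (Nat.factorial_pos _)
                  _ = w.factorial := this
              exact_mod_cast h2
            have hzk : |z k| ≤ R' := le_trans (hR z hz) (le_max_left R 1)
            have hwf0 : ((w.factorial : ℕ) : ℝ) ≠ 0 := by
              exact_mod_cast (Nat.factorial_pos w).ne'
            have hct' : c (t' - (j : ℕ)) ≤ c t' := hcmono (by omega)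
            calc |eval y ((w.descFactorial (i : ℕ)) • Gopt G w) * z k ^ ((j.succ : ℕ))|
                = ((w.descFactorial (i : ℕ) : ℕ) : ℝ) * |eval y (G i')| * |z k| ^ ((j : ℕ) + 1) := by
                  rw [hGopt, map_nsmul, nsmul_eq_mul, abs_mul, abs_mul, abs_pow, Nat.abs_cast,
                    hjsucc]
              _ ≤ ((w.factorial : ℕ) : ℝ)
                    * (c (t' - (j : ℕ)) / ((w.factorial : ℕ) : ℝ) * T * D) * R' ^ ((j : ℕ) + 1) := by
                  have hev : |eval y (G i')|
                      ≤ c (t' - (j : ℕ)) / (((i' : ℕ).factorial : ℕ) : ℝ) * T * D := hIH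
                  have hif : ((i' : ℕ) : ℕ) = w := rfl
                  rw [hif] at hev
                  apply mul_le_mul
                  · exact mul_le_mul hdf hev (abs_nonneg _) (Nat.cast_nonneg _)
                  · exact pow_le_pow_left₀ (abs_nonneg _) hzk _
                  · positivity
                  · have : 0 ≤ c (t' - (j : ℕ)) / ((w.factorial : ℕ) : ℝ) * T * D := by
                      have := (hcpos (t' - (j : ℕ))).le
                      positivity
                    positivity
              _ = c (t' - (j : ℕ)) * T * D * R' ^ ((j : ℕ) + 1) := by
                  field_simp
              _ ≤ c t' * T * D * R' ^ (e + 1) := by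
                  apply mul_le_mul
                  · apply mul_le_mul_of_nonneg_right
                      (mul_le_mul_of_nonneg_right hct' hT0) hD0
                  · exact pow_le_pow_right₀ hR'1 (by omega)
                  · positivity
                  · have := (hcpos t').le
                    have h2 : 0 ≤ c t' * T := mul_nonneg this hT0
                    exact mul_nonneg h2 hD0
              _ = c t' * R' ^ (e + 1) * T * D := by ring
          · have hGopt0 : Gopt G w = 0 := by rw [Gopt, dif_neg hwd]
            rw [hGopt0]
            simpa using hRHS0
        have hsumb : ∑ j : Fin e, |eval y ((DG^[(i : ℕ)] G) j.succ) * z k ^ ((j.succ : ℕ))|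
            ≤ B * c t' * T * D := by
          calc ∑ j : Fin e, |eval y ((DG^[(i : ℕ)] G) j.succ) * z k ^ ((j.succ : ℕ))|
              ≤ ∑ _j : Fin e, c t' * R' ^ (e + 1) * T * D :=
                Finset.sum_le_sum (fun j _ => hterm j)
            _ = (e : ℝ) * (c t' * R' ^ (e + 1) * T * D) := by
                rw [Finset.sum_const, Finset.card_univ, Fintype.card_fin, nsmul_eq_mul]
            _ ≤ ((e : ℝ) + 1) * (c t' * R' ^ (e + 1) * T * D) := by
                apply mul_le_mul_of_nonneg_right (by linarith)
                have := (hcpos t').le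
                have h1 : (0:ℝ) ≤ R' ^ (e+1) := by positivity
                have h2 : 0 ≤ c t' * R' ^ (e + 1) := by positivity
                exact mul_nonneg (mul_nonneg h2 hT0) hD0
            _ = B * c t' * T * D := by rw [hB]; ring
        have hfin : (((i : ℕ).factorial : ℕ) : ℝ) * |eval y (G i)| ≤ c (t' + 1) * T * D := by
          rw [hcs t']
          calc (((i : ℕ).factorial : ℕ) : ℝ) * |eval y (G i)|
              ≤ M ^ (i : ℕ) * ((degP G : ℝ)) ^ (m * (((i : ℕ) : ℕ) : ℝ)) * D
                + ∑ j : Fin e, |eval y ((DG^[(i : ℕ)] G) j.succ) * z k ^ ((j.succ : ℕ))| := habs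
            _ ≤ A * T * D + B * c t' * T * D :=
                add_le_add (mul_le_mul_of_nonneg_right (hMT i) hD0) hsumb
            _ = (A + B * c t') * T * D := by ring
        have hfp : (0 : ℝ) < (((i : ℕ).factorial : ℕ) : ℝ) := by
          exact_mod_cast Nat.factorial_pos _
        rw [div_mul_eq_mul_div, div_mul_eq_mul_div, le_div_iff₀ hfp]
        calc |eval y (G i)| * (((i : ℕ).factorial : ℕ) : ℝ)
            = (((i : ℕ).factorial : ℕ) : ℝ) * |eval y (G i)| := by ring
          _ ≤ c (t' + 1) * T * D := hfin
  -- conclude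
  intro i y hy
  obtain ⟨z, hz, rfl⟩ := hy
  have hit : (i : ℕ) + (e - (i : ℕ)) = e := by
    have := i.isLt; omega
  have hk := key (e - (i : ℕ)) i hit z hz
  have hce : c (e - (i : ℕ)) ≤ c e := hcmono (by omega)
  refine le_trans hk ?_
  have hfp : (0 : ℝ) < (((i : ℕ).factorial : ℕ) : ℝ) := by
    exact_mod_cast Nat.factorial_pos _
  have hdd : c (e - (i : ℕ)) / (((i : ℕ).factorial : ℕ) : ℝ)
      ≤ c e / (((i : ℕ).factorial : ℕ) : ℝ) := by
    gcongr
  exact mul_le_mul_of_nonneg_right (mul_le_mul_of_nonneg_right hdd hT0) hD0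
end
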